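/- arXiv:2512.04932 — 2 statements merged into one kernel-verified Lean document; each statement's English description precedes it below -/
import Mathlib

section
/- Let X be a linear order that is strongly augmentable on the right by Y, i.e. X ⪯ X + Y for the natural inclusion with Y non-empty. Then X ⪯ X + Σ_ζ Y, where Σ_ζ Y denotes the sum of copies of Y indexed by the integers with their usual order. -/
open FirstOrder Language

attribute [instance] FirstOrder.Language.orderStructure

universe u

set_option linter.unusedSectionVars false

/-- `f : M → N` is an elementary inclusion: it preserves and reflects all first-order
formulas of the language `L`. -/
def IsElemInclusion (L : FirstOrder.Language) (M : Type*) (N : Type*) [L.Structure M]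
    [L.Structure N] (f : M → N) : Prop :=
  ∀ (n : ℕ) (φ : L.Formula (Fin n)) (v : Fin n → M),
    φ.Realize (f ∘ v) ↔ φ.Realize v

namespace StmtAux
open scoped Classical

instance (M : Type*) [LE M] : Language.order.OrderedStructure M := ⟨fun _ => Iff.rfl⟩

/-! ### Ehrenfeucht–Fraïssé equivalence for linear orders -/

/-- Ehrenfeucht–Fraïssé equivalence of rank `n` between two linear orders, relative to a
list of matched pairs of parameters. -/
def EF (M N : Type*) [LinearOrder M] [LinearOrder N] : ℕ → List (M × N) → Prop
  | 0, l => ∀ p ∈ l, ∀ q ∈ l, ((p.1 ≤ q.1) ↔ (p.2 ≤ q.2))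
  | n+1, l => (∀ a : M, ∃ b : N, EF M N n ((a, b) :: l)) ∧
      (∀ b : N, ∃ a : M, EF M N n ((a, b) :: l))

section EFBasic

variable {M N P Q R : Type*} [LinearOrder M] [LinearOrder N] [LinearOrder P]
  [LinearOrder Q] [LinearOrder R]

theorem EF.sub {n : ℕ} {l l' : List (M × N)} (hsub : ∀ p ∈ l', p ∈ l) (h : EF M N n l) :
    EF M N n l' := by
  induction n generalizing l l' with
  | zero => exact fun p hp q hq => h p (hsub p hp) q (hsub q hq)
  | succ n ih =>
    have hsub' : ∀ c : M × N, ∀ p ∈ c :: l', p ∈ c :: l := by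
      intro c p hp
      rcases List.mem_cons.mp hp with rfl | hp
      · exact List.mem_cons_self
      · exact List.mem_cons_of_mem _ (hsub p hp)
    refine ⟨fun a => ?_, fun b => ?_⟩
    · obtain ⟨b, hb⟩ := h.1 a
      exact ⟨b, ih (hsub' (a, b)) hb⟩
    · obtain ⟨a, ha⟩ := h.2 b
      exact ⟨a, ih (hsub' (a, b)) ha⟩

theorem EF.of_isEmpty [IsEmpty M] [IsEmpty N] {n : ℕ} {l : List (M × N)} : EF M N n l := by
  induction n with
  | zero => exact fun p hp => isEmptyElim p.1
  | succ n ih => exact ⟨fun a => isEmptyElim a, fun b => isEmptyElim b⟩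

theorem EF.step_down {n : ℕ} {l : List (M × N)} (h : EF M N (n+1) l) : EF M N n l := by
  by_cases hM : Nonempty M
  · obtain ⟨a⟩ := hM
    obtain ⟨b, hb⟩ := h.1 a
    exact hb.sub (fun p hp => List.mem_cons_of_mem _ hp)
  · by_cases hN : Nonempty N
    · obtain ⟨b⟩ := hN
      obtain ⟨a, _⟩ := h.2 b
      exact absurd (Nonempty.intro a) hM
    · have : IsEmpty M := not_nonempty_iff.mp hM
      have : IsEmpty N := not_nonempty_iff.mp hN
      exact EF.of_isEmpty

theorem EF.mono {m n : ℕ} (hmn : m ≤ n) {l : List (M × N)} (h : EF M N n l) : EF M N m l := by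
  induction n with
  | zero => exact Nat.le_zero.mp hmn ▸ h
  | succ n ih =>
    rcases Nat.lt_or_ge m (n+1) with hm | hm
    · exact ih (Nat.lt_succ_iff.mp hm) h.step_down
    · exact (Nat.le_antisymm hmn hm) ▸ h

theorem EF.refl {n : ℕ} (l : List M) : EF M M n (l.map fun x => (x, x)) := by
  induction n generalizing l with
  | zero =>
    intro p hp q hq
    simp only [List.mem_map] at hp hq
    obtain ⟨x, _, rfl⟩ := hp; obtain ⟨y, _, rfl⟩ := hq
    exact Iff.rfl
  | succ n ih =>
    exact ⟨fun a => ⟨a, by simpa using ih (a :: l)⟩, fun a => ⟨a, by simpa using ih (a :: l)⟩⟩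

theorem EF.trans {n : ℕ} (l : List (P × Q × R))
    (h1 : EF P Q n (l.map fun t => (t.1, t.2.1)))
    (h2 : EF Q R n (l.map fun t => (t.2.1, t.2.2))) :
    EF P R n (l.map fun t => (t.1, t.2.2)) := by
  induction n generalizing l with
  | zero =>
    intro p hp q hq
    simp only [List.mem_map] at hp hq
    obtain ⟨t, ht, rfl⟩ := hp; obtain ⟨s, hs, rfl⟩ := hq
    exact ((h1 _ (List.mem_map_of_mem ht) _ (List.mem_map_of_mem hs)).trans
      (h2 _ (List.mem_map_of_mem ht) _ (List.mem_map_of_mem hs)))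
  | succ n ih =>
    constructor
    · intro a
      obtain ⟨b, hb⟩ := h1.1 a
      obtain ⟨c, hc⟩ := h2.1 b
      exact ⟨c, by simpa using ih ((a, b, c) :: l) (by simpa using hb) (by simpa using hc)⟩
    · intro c
      obtain ⟨b, hb⟩ := h2.2 c
      obtain ⟨a, ha⟩ := h1.2 b
      exact ⟨a, by simpa using ih ((a, b, c) :: l) (by simpa using ha) (by simpa using hb)⟩

/-- transport of EF along a surjective order-reflecting map on the left side -/
theorem EF.map_left {n : ℕ} {l : List (P × Q)} (g : P → M) (hsur : Function.Surjective g)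
    (hle : ∀ x y : P, g x ≤ g y ↔ x ≤ y) (h : EF P Q n l) :
    EF M Q n (l.map fun p => (g p.1, p.2)) := by
  induction n generalizing l with
  | zero =>
    intro p hp q hq
    simp only [List.mem_map] at hp hq
    obtain ⟨t, ht, rfl⟩ := hp; obtain ⟨s, hs, rfl⟩ := hq
    exact (hle _ _).trans (h _ ht _ hs)
  | succ n ih =>
    constructor
    · intro a
      obtain ⟨a₀, rfl⟩ := hsur a
      obtain ⟨b, hb⟩ := h.1 a₀
      exact ⟨b, by simpa using ih hb⟩
    · intro b
      obtain ⟨a₀, ha⟩ := h.2 b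
      exact ⟨g a₀, by simpa using ih ha⟩

theorem EF.map_right {n : ℕ} {l : List (P × Q)} (g : Q → N) (hsur : Function.Surjective g)
    (hle : ∀ x y : Q, g x ≤ g y ↔ x ≤ y) (h : EF P Q n l) :
    EF P N n (l.map fun p => (p.1, g p.2)) := by
  induction n generalizing l with
  | zero =>
    intro p hp q hq
    simp only [List.mem_map] at hp hq
    obtain ⟨t, ht, rfl⟩ := hp; obtain ⟨s, hs, rfl⟩ := hq
    exact (h _ ht _ hs).trans (hle _ _).symm
  | succ n ih =>
    constructor
    · intro a
      obtain ⟨b, hb⟩ := h.1 a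
      exact ⟨g b, by simpa using ih hb⟩
    · intro b
      obtain ⟨b₀, rfl⟩ := hsur b
      obtain ⟨a, ha⟩ := h.2 b₀
      exact ⟨a, by simpa using ih ha⟩

end EFBasic

section SumLex
variable {A A' B B' : Type*} [LinearOrder A] [LinearOrder A'] [LinearOrder B] [LinearOrder B']

/-- EF-equivalence composes along lexicographic sums. -/
theorem EF.sumLex {n : ℕ} {lA : List (A × A')} {lB : List (B × B')}
    (hA : EF A A' n lA) (hB : EF B B' n lB) :
    EF (A ⊕ₗ B) (A' ⊕ₗ B') n
      ((lA.map fun p => ((toLex (Sum.inl p.1) : A ⊕ₗ B), (toLex (Sum.inl p.2) : A' ⊕ₗ B'))) ++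
       (lB.map fun p => ((toLex (Sum.inr p.1) : A ⊕ₗ B), (toLex (Sum.inr p.2) : A' ⊕ₗ B')))) := by
  induction n generalizing lA lB with
  | zero =>
    intro p hp q hq
    simp only [List.mem_append, List.mem_map] at hp hq
    rcases hp with ⟨t, ht, rfl⟩ | ⟨t, ht, rfl⟩ <;> rcases hq with ⟨s, hs, rfl⟩ | ⟨s, hs, rfl⟩
    · simpa only [Sum.Lex.inl_le_inl_iff] using hA _ ht _ hs
    · simp only [Sum.Lex.inl_le_inr]
    · simp only [iff_iff_implies_and_implies]
      constructor <;> intro hc <;> exact absurd hc Sum.Lex.not_inr_le_inl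
    · simpa only [Sum.Lex.inr_le_inr_iff] using hB _ ht _ hs
  | succ n ih =>
    constructor
    · intro a
      rcases h : ofLex a with a₀ | b₀
      · obtain ⟨b, hb⟩ := hA.1 a₀
        refine ⟨toLex (Sum.inl b), ?_⟩
        have key := ih hb hB.step_down
        have ha : a = toLex (Sum.inl a₀) := by rw [← h]; rfl
        rw [ha]
        exact key.sub (by intro p hp; simp only [List.map_cons, List.cons_append,
          List.mem_cons] at hp ⊢; tauto)
      · obtain ⟨b, hb⟩ := hB.1 b₀
        refine ⟨toLex (Sum.inr b), ?_⟩
        have key := ih hA.step_down hb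
        have ha : a = toLex (Sum.inr b₀) := by rw [← h]; rfl
        rw [ha]
        refine key.sub ?_
        intro p hp
        simp only [List.map_cons, List.mem_append, List.mem_cons] at hp ⊢
        tauto
    · intro a
      rcases h : ofLex a with a₀ | b₀
      · obtain ⟨b, hb⟩ := hA.2 a₀
        refine ⟨toLex (Sum.inl b), ?_⟩
        have key := ih hb hB.step_down
        have ha : a = toLex (Sum.inl a₀) := by rw [← h]; rfl
        rw [ha]
        exact key.sub (by intro p hp; simp only [List.map_cons, List.cons_append,
          List.mem_cons] at hp ⊢; tauto)
      · obtain ⟨b, hb⟩ := hB.2 b₀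
        refine ⟨toLex (Sum.inr b), ?_⟩
        have key := ih hA.step_down hb
        have ha : a = toLex (Sum.inr b₀) := by rw [← h]; rfl
        rw [ha]
        refine key.sub ?_
        intro p hp
        simp only [List.map_cons, List.mem_append, List.mem_cons] at hp ⊢
        tauto

end SumLex

/-! ### Hintikka formulas -/

/-- every term of the language of orders is a variable -/
theorem term_eq_var {β : Type*} : ∀ t : Language.order.Term β, ∃ s : β, t = Term.var s
  | Term.var s => ⟨s, rfl⟩
  | Term.func f _ => isEmptyElim f

/-- quantifier rank of a bounded formula in the language of orders -/
def qr : {α : Type*} → {n : ℕ} → Language.order.BoundedFormula α n → ℕ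
  | _, _, BoundedFormula.falsum => 0
  | _, _, BoundedFormula.equal _ _ => 0
  | _, _, BoundedFormula.rel _ _ => 0
  | _, _, BoundedFormula.imp f g => max (qr f) (qr g)
  | _, _, BoundedFormula.all f => qr f + 1

def atomLe {c : ℕ} (i j : Fin c) : Language.order.BoundedFormula Empty c :=
  Term.le (Term.var (Sum.inr i)) (Term.var (Sum.inr j))

@[simp] theorem realize_atomLe {c : ℕ} {M : Type*} [LinearOrder M] (i j : Fin c)
    (xs : Fin c → M) : (atomLe i j).Realize Empty.elim xs ↔ xs i ≤ xs j := by
  simp [atomLe]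

def conjL {c : ℕ} (l : List (Language.order.BoundedFormula Empty c)) :
    Language.order.BoundedFormula Empty c := l.foldr (· ⊓ ·) ⊤

def disjL {c : ℕ} (l : List (Language.order.BoundedFormula Empty c)) :
    Language.order.BoundedFormula Empty c := l.foldr (· ⊔ ·) ⊥

@[simp] theorem realize_conjL {c : ℕ} {M : Type*} [LinearOrder M]
    (l : List (Language.order.BoundedFormula Empty c)) (xs : Fin c → M) :
    (conjL l).Realize Empty.elim xs ↔ ∀ φ ∈ l, φ.Realize Empty.elim xs := by
  induction l with
  | nil => simp [conjL]
  | cons φ l ih =>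
    simp only [conjL, List.foldr_cons, BoundedFormula.realize_inf, List.mem_cons] at *
    constructor
    · rintro ⟨h1, h2⟩ ψ (rfl | hψ)
      · exact h1
      · exact ih.mp h2 ψ hψ
    · intro h
      exact ⟨h φ (.inl rfl), ih.mpr fun ψ hψ => h ψ (.inr hψ)⟩

@[simp] theorem realize_disjL {c : ℕ} {M : Type*} [LinearOrder M]
    (l : List (Language.order.BoundedFormula Empty c)) (xs : Fin c → M) :
    (disjL l).Realize Empty.elim xs ↔ ∃ φ ∈ l, φ.Realize Empty.elim xs := by
  induction l with
  | nil => simp [disjL]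
  | cons φ l ih =>
    simp only [disjL, List.foldr_cons, BoundedFormula.realize_sup, List.mem_cons] at *
    constructor
    · rintro (h1 | h2)
      · exact ⟨φ, .inl rfl, h1⟩
      · obtain ⟨ψ, hψ, h⟩ := ih.mp h2
        exact ⟨ψ, .inr hψ, h⟩
    · rintro ⟨ψ, (rfl | hψ), h⟩
      · exact .inl h
      · exact .inr (ih.mpr ⟨ψ, hψ, h⟩)

def pl (c : ℕ) : List (Fin c × Fin c) :=
  (List.finRange c).flatMap fun i => (List.finRange c).map fun j => (i, j)

theorem mem_pl {c : ℕ} (i j : Fin c) : (i, j) ∈ pl c := by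
  simp only [pl, List.mem_flatMap, List.mem_map]
  exact ⟨i, List.mem_finRange i, j, List.mem_finRange j, rfl⟩

noncomputable def hin0 {c : ℕ} (g : Fin c → Fin c → Bool) :
    Language.order.BoundedFormula Empty c :=
  conjL ((pl c).map fun p => if g p.1 p.2 then atomLe p.1 p.2 else (atomLe p.1 p.2).not)

noncomputable def hinStep {c : ℕ} (S : Finset (Language.order.BoundedFormula Empty (c+1))) :
    Language.order.BoundedFormula Empty c :=
  conjL (S.toList.map BoundedFormula.ex) ⊓ (disjL S.toList).all

noncomputable def HSet : ℕ → (c : ℕ) → Finset (Language.order.BoundedFormula Empty c)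
  | 0, c => (Finset.univ : Finset (Fin c → Fin c → Bool)).image hin0
  | n+1, c => ((HSet n (c+1)).powerset).image hinStep

/-- the rank-`n` Hintikka formula of a tuple in a linear order -/
noncomputable def hin : (n : ℕ) → {c : ℕ} → (N : Type*) → [LinearOrder N] →
    (Fin c → N) → Language.order.BoundedFormula Empty c
  | 0, _, _, _, w => hin0 fun i j => decide (w i ≤ w j)
  | n+1, c, N, _, w =>
      hinStep ((HSet n (c+1)).filter fun ψ => ∃ a : N, ψ = hin n N (Fin.snoc w a))

theorem hin_mem {n : ℕ} {c : ℕ} (N : Type*) [LinearOrder N] (w : Fin c → N) :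
    hin n N w ∈ HSet n c := by
  cases n with
  | zero => exact Finset.mem_image_of_mem _ (Finset.mem_univ _)
  | succ n => exact Finset.mem_image_of_mem _ (Finset.mem_powerset.mpr (Finset.filter_subset _ _))

theorem hin_self : ∀ (n : ℕ) {c : ℕ} (N : Type*) [LinearOrder N] (w : Fin c → N),
    (hin n N w).Realize Empty.elim w
  | 0, c, N, _, w => by
    simp only [hin, hin0, realize_conjL, List.mem_map]
    rintro φ ⟨p, hp, rfl⟩
    by_cases h : w p.1 ≤ w p.2
    · simp [h]
    · simp [h, BoundedFormula.realize_not]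
  | n+1, c, N, _, w => by
    simp only [hin, hinStep, BoundedFormula.realize_inf, realize_conjL, List.mem_map,
      BoundedFormula.realize_all]
    constructor
    · rintro φ ⟨ψ, hψ, rfl⟩
      rw [Finset.mem_toList, Finset.mem_filter] at hψ
      obtain ⟨-, a, rfl⟩ := hψ
      rw [BoundedFormula.realize_ex]
      exact ⟨a, hin_self n N _⟩
    · intro a
      rw [realize_disjL]
      refine ⟨hin n N (Fin.snoc w a), ?_, hin_self n N _⟩
      rw [Finset.mem_toList, Finset.mem_filter]
      exact ⟨hin_mem N _, a, rfl⟩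

theorem hin_ef : ∀ (n : ℕ) {c : ℕ} (N : Type*) [LinearOrder N] (w : Fin c → N)
    (M : Type*) [LinearOrder M] (u : Fin c → M),
    (hin n N w).Realize Empty.elim u → EF N M n (List.ofFn fun i => (w i, u i))
  | 0, c, N, _, w, M, _, u, hr => by
    intro p hp q hq
    simp only [List.mem_ofFn] at hp hq
    obtain ⟨i, rfl⟩ := hp
    obtain ⟨j, rfl⟩ := hq
    simp only [hin, hin0, realize_conjL, List.mem_map] at hr
    have := hr _ ⟨(i, j), mem_pl i j, rfl⟩
    by_cases h : w i ≤ w j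
    · simp only [decide_eq_true h, if_true, realize_atomLe] at this
      show w i ≤ w j ↔ u i ≤ u j
      exact ⟨fun _ => this, fun _ => h⟩
    · rw [if_neg (by simpa using h), BoundedFormula.realize_not, realize_atomLe] at this
      show w i ≤ w j ↔ u i ≤ u j
      exact ⟨fun hc => absurd hc h, fun hc => absurd hc this⟩
  | n+1, c, N, _, w, M, _, u, hr => by
    simp only [hin, hinStep, BoundedFormula.realize_inf, realize_conjL,
      BoundedFormula.realize_all] at hr
    obtain ⟨hconj, hall⟩ := hr
    have hsub : ∀ (a : N) (b : M),
        ∀ p ∈ ((a, b) :: List.ofFn fun i => (w i, u i) : List (N × M)),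
          p ∈ List.ofFn fun i => (Fin.snoc w a i, Fin.snoc u b i) := by
      intro a b p hp
      simp only [List.mem_cons, List.mem_ofFn] at hp ⊢
      rcases hp with rfl | ⟨i, rfl⟩
      · exact ⟨Fin.last c, by simp⟩
      · exact ⟨i.castSucc, by simp⟩
    constructor
    · intro a
      have hmem : (hin n N (Fin.snoc w a)).ex ∈ (((HSet n (c+1)).filter
          fun ψ => ∃ a : N, ψ = hin n N (Fin.snoc w a)).toList.map BoundedFormula.ex) := by
        refine List.mem_map_of_mem ?_
        rw [Finset.mem_toList, Finset.mem_filter]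
        exact ⟨hin_mem N _, a, rfl⟩
      have := hconj _ hmem
      rw [BoundedFormula.realize_ex] at this
      obtain ⟨b, hb⟩ := this
      exact ⟨b, (hin_ef n N _ M _ hb).sub (hsub a b)⟩
    · intro b
      have := hall b
      rw [realize_disjL] at this
      obtain ⟨ψ, hψ, hb⟩ := this
      rw [Finset.mem_toList, Finset.mem_filter] at hψ
      obtain ⟨-, a, rfl⟩ := hψ
      exact ⟨a, (hin_ef n N _ M _ hb).sub (hsub a b)⟩

/-! ### EF-equivalence implies elementary equivalence up to quantifier rank -/

theorem realize_iff_of_EF {α : Type*} {c : ℕ} (φ : Language.order.BoundedFormula α c) :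
    ∀ {n : ℕ}, qr φ ≤ n → ∀ {M N : Type*} [LinearOrder M] [LinearOrder N]
    {l : List (M × N)}, EF M N n l →
    ∀ {vM : α → M} {vN : α → N} {xsM : Fin c → M} {xsN : Fin c → N},
    (∀ a, (vM a, vN a) ∈ l) → (∀ i, (xsM i, xsN i) ∈ l) →
    (φ.Realize vM xsM ↔ φ.Realize vN xsN) := by
  induction φ with
  | falsum =>
    intro n _ M N _ _ l _ vM vN xsM xsN _ _
    exact Iff.rfl
  | @equal c t₁ t₂ =>
    intro n _ M N _ _ l hEF vM vN xsM xsN hv hxs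
    obtain ⟨s₁, rfl⟩ := term_eq_var t₁
    obtain ⟨s₂, rfl⟩ := term_eq_var t₂
    have h0 : EF M N 0 l := hEF.mono (Nat.zero_le _)
    have hpair : ∀ s : α ⊕ Fin c,
        ((Sum.elim vM xsM s : M), (Sum.elim vN xsN s : N)) ∈ l := by
      rintro (a | i)
      · exact hv a
      · exact hxs i
    have key : ∀ s s' : α ⊕ Fin c,
        (Sum.elim vM xsM s ≤ Sum.elim vM xsM s' ↔ Sum.elim vN xsN s ≤ Sum.elim vN xsN s') :=
      fun s s' => h0 _ (hpair s) _ (hpair s')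
    show Sum.elim vM xsM s₁ = Sum.elim vM xsM s₂ ↔ Sum.elim vN xsN s₁ = Sum.elim vN xsN s₂
    constructor
    · intro he
      exact le_antisymm ((key s₁ s₂).mp he.le) ((key s₂ s₁).mp he.ge)
    · intro he
      exact le_antisymm ((key s₁ s₂).mpr he.le) ((key s₂ s₁).mpr he.ge)
  | @rel c k R ts =>
    intro n _ M N _ _ l hEF vM vN xsM xsN hv hxs
    cases R
    obtain ⟨s₁, h₁⟩ := term_eq_var (ts 0)
    obtain ⟨s₂, h₂⟩ := term_eq_var (ts 1)
    have h0 : EF M N 0 l := hEF.mono (Nat.zero_le _)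
    have hpair : ∀ s : α ⊕ Fin c,
        ((Sum.elim vM xsM s : M), (Sum.elim vN xsN s : N)) ∈ l := by
      rintro (a | i)
      · exact hv a
      · exact hxs i
    have hreM : (BoundedFormula.rel Language.orderRel.le ts).Realize vM xsM ↔
        Sum.elim vM xsM s₁ ≤ Sum.elim vM xsM s₂ := by
      have hiff : (BoundedFormula.rel Language.orderRel.le ts).Realize vM xsM ↔
          Term.realize (Sum.elim vM xsM) (ts 0) ≤ Term.realize (Sum.elim vM xsM) (ts 1) := Iff.rfl
      rw [hiff, h₁, h₂]
      exact Iff.rfl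
    have hreN : (BoundedFormula.rel Language.orderRel.le ts).Realize vN xsN ↔
        Sum.elim vN xsN s₁ ≤ Sum.elim vN xsN s₂ := by
      have hiff : (BoundedFormula.rel Language.orderRel.le ts).Realize vN xsN ↔
          Term.realize (Sum.elim vN xsN) (ts 0) ≤ Term.realize (Sum.elim vN xsN) (ts 1) := Iff.rfl
      rw [hiff, h₁, h₂]
      exact Iff.rfl
    rw [hreM, hreN]
    exact h0 _ (hpair s₁) _ (hpair s₂)
  | @imp c f g ihf ihg =>
    intro n hn M N _ _ l hEF vM vN xsM xsN hv hxs
    have hn' : max (qr f) (qr g) ≤ n := by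
      have := hn; simp only [qr] at this; exact this
    rw [BoundedFormula.realize_imp, BoundedFormula.realize_imp]
    have hf := ihf (le_trans (le_max_left _ _) hn') hEF hv hxs
    have hg := ihg (le_trans (le_max_right _ _) hn') hEF hv hxs
    exact imp_congr hf hg
  | @all c f ihf =>
    intro n hn M N _ _ l hEF vM vN xsM xsN hv hxs
    have hn' : qr f + 1 ≤ n := by
      have := hn; simp only [qr] at this; exact this
    cases n with
    | zero => exact absurd hn' (by omega)
    | succ m =>
      have hq : qr f ≤ m := by omega
      rw [BoundedFormula.realize_all, BoundedFormula.realize_all]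
      constructor
      · intro hM b
        obtain ⟨a, ha⟩ := hEF.2 b
        have hmem : ∀ p ∈ l, p ∈ ((a, b) :: l) := fun p hp => List.mem_cons_of_mem _ hp
        refine (ihf hq ha (fun x => hmem _ (hv x)) ?_).mp (hM a)
        intro i
        refine Fin.lastCases ?_ ?_ i
        · simp only [Fin.snoc_last]
          exact List.mem_cons_self
        · intro j
          simp only [Fin.snoc_castSucc]
          exact hmem _ (hxs j)
      · intro hN a
        obtain ⟨b, hb⟩ := hEF.1 a
        have hmem : ∀ p ∈ l, p ∈ ((a, b) :: l) := fun p hp => List.mem_cons_of_mem _ hp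
        refine (ihf hq hb (fun x => hmem _ (hv x)) ?_).mpr (hN b)
        intro i
        refine Fin.lastCases ?_ ?_ i
        · simp only [Fin.snoc_last]
          exact List.mem_cons_self
        · intro j
          simp only [Fin.snoc_castSucc]
          exact hmem _ (hxs j)

/-! ### Elementary inclusions give EF-equivalence -/

theorem ef_of_elem {M N : Type u} [LinearOrder M] [LinearOrder N] {f : M → N}
    (hf : IsElemInclusion Language.order M N f) :
    ∀ (n : ℕ) (p : List M), EF N M n (p.map fun x => (f x, x)) := by
  intro n
  induction n with
  | zero =>
    intro p q hq r hr
    simp only [List.mem_map] at hq hr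
    obtain ⟨x, _, rfl⟩ := hq
    obtain ⟨y, _, rfl⟩ := hr
    have atom : ∀ x y : M, f x ≤ f y ↔ x ≤ y := by
      intro x y
      have := hf 2 (Term.le (Term.var (Sum.inl 0)) (Term.var (Sum.inl 1))) ![x, y]
      simpa [Formula.Realize, Term.le, Function.comp] using this
    exact atom x y
  | succ n ih =>
    intro p
    constructor
    · intro a
      classical
      set c := p.length with hc
      set w : Fin (c+1) → N := Fin.snoc (fun i => f (p.get i)) a with hw
      set χ : Language.order.BoundedFormula Empty (c+1) := hin n N w with hχ
      have hNex : χ.ex.Realize Empty.elim (fun i => f (p.get i)) := by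
        rw [BoundedFormula.realize_ex]
        exact ⟨a, by rw [hχ, hw]; exact hin_self n N _⟩
      set bridged : Language.order.Formula (Fin c) :=
        (BoundedFormula.toFormula χ.ex).relabel (Sum.elim (fun e => Empty.elim e) id) with hbr
      have hbridge : ∀ (P : Type u) [LinearOrder P] (xs : Fin c → P),
          bridged.Realize xs ↔ χ.ex.Realize Empty.elim xs := by
        intro P _ xs
        rw [hbr, Formula.realize_relabel, BoundedFormula.realize_toFormula]
        have e1 : ((xs ∘ Sum.elim (fun e : Empty => Empty.elim e) id) ∘ Sum.inl)
            = (Empty.elim : Empty → P) := funext fun z => z.elim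
        have e2 : ((xs ∘ Sum.elim (fun e : Empty => Empty.elim e) id) ∘ Sum.inr) = xs :=
          funext fun i => rfl
        rw [e1, e2]
      have hNb : bridged.Realize (f ∘ (fun i => p.get i)) := by
        rw [hbridge N (f ∘ (fun i => p.get i))]
        exact hNex
      have hMb : bridged.Realize (fun i => p.get i) := (hf c bridged _).mp hNb
      rw [hbridge M (fun i => p.get i), BoundedFormula.realize_ex] at hMb
      obtain ⟨b, hb⟩ := hMb
      refine ⟨b, ?_⟩
      have hef := hin_ef n N w M (Fin.snoc (fun i => p.get i) b) (by rw [← hχ]; exact hb)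
      refine hef.sub ?_
      intro q hq
      simp only [List.mem_cons, List.mem_map, List.mem_ofFn] at hq ⊢
      rcases hq with rfl | ⟨x, hx, rfl⟩
      · refine ⟨Fin.last c, ?_⟩
        simp [hw]
      · obtain ⟨i, hi⟩ := List.get_of_mem hx
        refine ⟨i.castSucc, ?_⟩
        subst hi
        simp only [hw, Fin.snoc_castSucc]
    · intro b
      refine ⟨f b, ?_⟩
      have := ih (b :: p)
      simpa using this

/-! ### The concrete geometry: finite approximations of `X ⊕ₗ (ℤ ×ₗ Y)` -/

section Concrete

variable (X Y : Type u) [LinearOrder X] [LinearOrder Y]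

/-- the finite approximation `X + j·Y` -/
abbrev CC (j : ℕ) : Type u := X ⊕ₗ (Fin j ×ₗ Y)

/-- the ambient structure `X + ζ·Y` -/
abbrev MM : Type u := X ⊕ₗ (ℤ ×ₗ Y)

variable {X Y}

/-- a map on `X + j·Y` acting as identity on `X` and relabelling the copies of `Y` -/
def blockMap {Z : Type*} {j : ℕ} (g : Fin j → Z) (z : X ⊕ₗ (Fin j ×ₗ Y)) : X ⊕ₗ (Z ×ₗ Y) :=
  match ofLex z with
  | Sum.inl x => toLex (Sum.inl x)
  | Sum.inr p => toLex (Sum.inr (toLex (g (ofLex p).1, (ofLex p).2)))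

@[simp] theorem blockMap_inl {Z : Type*} {j : ℕ} (g : Fin j → Z) (x : X) :
    (blockMap (Y := Y) g (toLex (Sum.inl x))) = toLex (Sum.inl x) := rfl

@[simp] theorem blockMap_inr {Z : Type*} {j : ℕ} (g : Fin j → Z) (i : Fin j) (y : Y) :
    (blockMap (X := X) g (toLex (Sum.inr (toLex (i, y))))) = toLex (Sum.inr (toLex (g i, y))) :=
  rfl

theorem sum_lex_cases {A B : Type*} (z : A ⊕ₗ B) :
    (∃ a, z = toLex (Sum.inl a)) ∨ (∃ b, z = toLex (Sum.inr b)) := by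
  rcases hz : ofLex z with a | b
  · exact Or.inl ⟨a, by rw [← hz]; rfl⟩
  · exact Or.inr ⟨b, by rw [← hz]; rfl⟩

theorem prod_lex_eta {A B : Type*} (p : A ×ₗ B) : p = toLex ((ofLex p).1, (ofLex p).2) := rfl

theorem blockMap_le {Z : Type*} [LinearOrder Z] {j : ℕ} (g : Fin j → Z)
    (hg : ∀ i i', g i ≤ g i' ↔ i ≤ i') (z w : X ⊕ₗ (Fin j ×ₗ Y)) :
    blockMap g z ≤ blockMap g w ↔ z ≤ w := by
  have hglt : ∀ i i', g i < g i' ↔ i < i' := by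
    intro i i'
    rw [lt_iff_le_not_ge, lt_iff_le_not_ge, hg, hg]
  have hgeq : ∀ i i', g i = g i' ↔ i = i' := by
    intro i i'
    rw [le_antisymm_iff, le_antisymm_iff, hg, hg]
  rcases sum_lex_cases z with ⟨x, rfl⟩ | ⟨p, rfl⟩ <;>
    rcases sum_lex_cases w with ⟨x', rfl⟩ | ⟨p', rfl⟩
  · simp only [blockMap_inl, Sum.Lex.inl_le_inl_iff]
  · rw [prod_lex_eta p']
    simp only [blockMap_inl, blockMap_inr]
    constructor <;> intro <;> exact Sum.Lex.inl_le_inr _ _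
  · rw [prod_lex_eta p]
    simp only [blockMap_inl, blockMap_inr]
    constructor <;> intro hc <;> exact absurd hc Sum.Lex.not_inr_le_inl
  · rw [prod_lex_eta p, prod_lex_eta p']
    simp only [blockMap_inr, Sum.Lex.inr_le_inr_iff, Prod.Lex.le_iff, ofLex_toLex, hglt, hgeq]

/-- the canonical inclusion of `X` into `X + j·Y` -/
def inlC (j : ℕ) (x : X) : CC X Y j := toLex (Sum.inl x)

/-- the upward shift `X + j·Y → X + (s+j)·Y`, inserting `s` new copies next to `X` -/
def shiftC (s j : ℕ) : CC X Y j → CC X Y (s + j) := blockMap fun i => Fin.natAdd s i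

/-- the two-sided extension `X + j·Y → X + (s+j+u)·Y` -/
def eC (s j u : ℕ) : CC X Y j → CC X Y (s + j + u) :=
  blockMap fun i => Fin.castAdd u (Fin.natAdd s i)

/-- embedding of `X + j·Y` into `X + ζ·Y`, with the copies of `Y` placed at positions
`-o, …, j-1-o` -/
def embC (j : ℕ) (o : ℤ) : CC X Y j → MM X Y := blockMap fun i => (i : ℤ) - o

theorem shiftC_le (s j : ℕ) (z w : CC X Y j) : shiftC s j z ≤ shiftC s j w ↔ z ≤ w :=
  blockMap_le _ (by
    intro i i'
    rw [Fin.le_def, Fin.le_def, Fin.coe_natAdd, Fin.coe_natAdd]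
    omega) z w

theorem embC_le (j : ℕ) (o : ℤ) (z w : CC X Y j) : embC j o z ≤ embC j o w ↔ z ≤ w :=
  blockMap_le _ (by
    intro i i'
    rw [Fin.le_def]
    omega) z w

theorem embC_compat (s j u : ℕ) (o : ℤ) (c : CC X Y j) :
    embC (s + j + u) (o + s) (eC s j u c) = embC j o c := by
  rcases sum_lex_cases c with ⟨x, rfl⟩ | ⟨p, rfl⟩
  · rfl
  · rw [prod_lex_eta p]
    simp only [embC, eC, blockMap_inr]
    congr 1
    congr 1
    congr 1
    simp only [Fin.coe_castAdd, Fin.coe_natAdd]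
    push_cast
    ring

/-- the reassociation map `(X + a·Y) + b·Y → X + (a+b)·Y` -/
def piC (a b : ℕ) (z : (CC X Y a) ⊕ₗ (Fin b ×ₗ Y)) : CC X Y (a + b) :=
  match ofLex z with
  | Sum.inl c => (match ofLex c with
    | Sum.inl x => toLex (Sum.inl x)
    | Sum.inr p => toLex (Sum.inr (toLex (Fin.castAdd b (ofLex p).1, (ofLex p).2))))
  | Sum.inr p => toLex (Sum.inr (toLex (Fin.natAdd a (ofLex p).1, (ofLex p).2)))

@[simp] theorem piC_inl_inl (a b : ℕ) (x : X) :
    piC a b (toLex (Sum.inl (toLex (Sum.inl x)))) = (toLex (Sum.inl x) : CC X Y (a+b)) := rfl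

@[simp] theorem piC_inl_inr (a b : ℕ) (i : Fin a) (y : Y) :
    piC a b (toLex (Sum.inl ((toLex (Sum.inr (toLex (i, y)))) : CC X Y a)))
      = (toLex (Sum.inr (toLex (Fin.castAdd b i, y))) : CC X Y (a+b)) := rfl

@[simp] theorem piC_inr (a b : ℕ) (i : Fin b) (y : Y) :
    piC a b (toLex (Sum.inr (toLex (i, y))))
      = (toLex (Sum.inr (toLex (Fin.natAdd a i, y))) : CC X Y (a+b)) := rfl

theorem piC_surj (a b : ℕ) : Function.Surjective (piC (X := X) (Y := Y) a b) := by
  intro w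
  rcases sum_lex_cases w with ⟨x, rfl⟩ | ⟨p, rfl⟩
  · exact ⟨toLex (Sum.inl (toLex (Sum.inl x))), rfl⟩
  · rw [prod_lex_eta p]
    set i := (ofLex p).1 with hi
    have hib := i.isLt
    by_cases hlt : (i : ℕ) < a
    · refine ⟨toLex (Sum.inl (toLex (Sum.inr (toLex (⟨i, hlt⟩, (ofLex p).2))))), ?_⟩
      have he : Fin.castAdd b (⟨(i : ℕ), hlt⟩ : Fin a) = i := Fin.ext (by simp)
      rw [piC_inl_inr, he]
    · refine ⟨toLex (Sum.inr (toLex (⟨(i : ℕ) - a, by omega⟩, (ofLex p).2))), ?_⟩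
      have he : Fin.natAdd a (⟨(i : ℕ) - a, by omega⟩ : Fin b) = i := Fin.ext (by
        rw [Fin.coe_natAdd]
        show a + ((i : ℕ) - a) = (i : ℕ)
        omega)
      rw [piC_inr, he]

theorem piC_le (a b : ℕ) (z w : (CC X Y a) ⊕ₗ (Fin b ×ₗ Y)) :
    piC a b z ≤ piC a b w ↔ z ≤ w := by
  rcases sum_lex_cases z with ⟨c, rfl⟩ | ⟨p, rfl⟩
  case inl =>
    rcases sum_lex_cases c with ⟨x, rfl⟩ | ⟨q, rfl⟩ <;>
      rcases sum_lex_cases w with ⟨c', rfl⟩ | ⟨p', rfl⟩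
    · rcases sum_lex_cases c' with ⟨x', rfl⟩ | ⟨q', rfl⟩
      · simp only [piC_inl_inl, Sum.Lex.inl_le_inl_iff]
      · rw [prod_lex_eta q']
        simp only [piC_inl_inl, piC_inl_inr]
        constructor <;> intro
        · exact Sum.Lex.inl_le_inl_iff.mpr (Sum.Lex.inl_le_inr _ _)
        · exact Sum.Lex.inl_le_inr _ _
    · rw [prod_lex_eta p']
      simp only [piC_inl_inl, piC_inr]
      constructor <;> intro
      · exact Sum.Lex.inl_le_inr _ _
      · exact Sum.Lex.inl_le_inr _ _
    · rcases sum_lex_cases c' with ⟨x', rfl⟩ | ⟨q', rfl⟩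
      · rw [prod_lex_eta q]
        simp only [piC_inl_inr, piC_inl_inl]
        constructor <;> intro hc
        · exact absurd hc Sum.Lex.not_inr_le_inl
        · exact absurd (Sum.Lex.inl_le_inl_iff.mp hc) Sum.Lex.not_inr_le_inl
      · rw [prod_lex_eta q, prod_lex_eta q']
        simp only [piC_inl_inr, Sum.Lex.inr_le_inr_iff, Sum.Lex.inl_le_inl_iff,
          Prod.Lex.le_iff, ofLex_toLex, Fin.lt_def, Fin.coe_castAdd, Fin.ext_iff]
    · rw [prod_lex_eta q, prod_lex_eta p']
      simp only [piC_inl_inr, piC_inr, Sum.Lex.inr_le_inr_iff, Prod.Lex.le_iff, ofLex_toLex, Fin.lt_def,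
        Fin.coe_castAdd, Fin.coe_natAdd, Fin.ext_iff]
      constructor <;> intro
      · exact Sum.Lex.inl_le_inr _ _
      · left
        omega
  case inr =>
    rcases sum_lex_cases w with ⟨c', rfl⟩ | ⟨p', rfl⟩
    · rcases sum_lex_cases c' with ⟨x', rfl⟩ | ⟨q', rfl⟩
      · rw [prod_lex_eta p]
        simp only [piC_inr, piC_inl_inl]
        constructor <;> intro hc
        · exact absurd hc Sum.Lex.not_inr_le_inl
        · exact absurd hc Sum.Lex.not_inr_le_inl
      · rw [prod_lex_eta p, prod_lex_eta q']
        simp only [piC_inr, piC_inl_inr, Sum.Lex.inr_le_inr_iff, Prod.Lex.le_iff, ofLex_toLex, Fin.lt_def,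
          Fin.coe_castAdd, Fin.coe_natAdd, Fin.ext_iff]
        constructor <;> intro hc
        · omega
        · exact absurd hc Sum.Lex.not_inr_le_inl
    · rw [prod_lex_eta p, prod_lex_eta p']
      simp only [piC_inr, Sum.Lex.inr_le_inr_iff, Prod.Lex.le_iff, ofLex_toLex, Fin.lt_def,
        Fin.coe_natAdd, Fin.ext_iff]
      constructor <;> rintro (hc | ⟨he, hy⟩)
      · left; omega
      · right; exact ⟨by omega, hy⟩
      · left; omega
      · right; exact ⟨by omega, hy⟩

/-- the reassociation map `(X + Y) + j·Y → X + (j+1)·Y` -/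
def kapC (j : ℕ) (z : (X ⊕ₗ Y) ⊕ₗ (Fin j ×ₗ Y)) : CC X Y (j + 1) :=
  match ofLex z with
  | Sum.inl c => (match ofLex c with
    | Sum.inl x => toLex (Sum.inl x)
    | Sum.inr y => toLex (Sum.inr (toLex ((0 : Fin (j+1)), y))))
  | Sum.inr p => toLex (Sum.inr (toLex ((ofLex p).1.succ, (ofLex p).2)))

@[simp] theorem kapC_inl_inl (j : ℕ) (x : X) :
    kapC j (toLex (Sum.inl (toLex (Sum.inl x)))) = (toLex (Sum.inl x) : CC X Y (j+1)) := rfl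

@[simp] theorem kapC_inl_inr (j : ℕ) (y : Y) :
    kapC (X := X) j (toLex (Sum.inl (toLex (Sum.inr y))))
      = (toLex (Sum.inr (toLex ((0 : Fin (j+1)), y))) : CC X Y (j+1)) := rfl

@[simp] theorem kapC_inr (j : ℕ) (i : Fin j) (y : Y) :
    kapC (X := X) j (toLex (Sum.inr (toLex (i, y))))
      = (toLex (Sum.inr (toLex (i.succ, y))) : CC X Y (j+1)) := rfl

theorem kapC_surj (j : ℕ) : Function.Surjective (kapC (X := X) (Y := Y) j) := by
  intro w
  rcases sum_lex_cases w with ⟨x, rfl⟩ | ⟨p, rfl⟩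
  · exact ⟨toLex (Sum.inl (toLex (Sum.inl x))), rfl⟩
  · rw [prod_lex_eta p]
    rcases Fin.eq_zero_or_eq_succ (ofLex p).1 with h0 | ⟨i, hi⟩
    · exact ⟨toLex (Sum.inl (toLex (Sum.inr (ofLex p).2))), by rw [kapC_inl_inr, h0]⟩
    · exact ⟨toLex (Sum.inr (toLex (i, (ofLex p).2))), by rw [kapC_inr, hi]⟩

theorem kapC_le (j : ℕ) (z w : (X ⊕ₗ Y) ⊕ₗ (Fin j ×ₗ Y)) :
    kapC j z ≤ kapC j w ↔ z ≤ w := by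
  rcases sum_lex_cases z with ⟨c, rfl⟩ | ⟨p, rfl⟩
  case inl =>
    rcases sum_lex_cases c with ⟨x, rfl⟩ | ⟨y, rfl⟩ <;>
      rcases sum_lex_cases w with ⟨c', rfl⟩ | ⟨p', rfl⟩
    · rcases sum_lex_cases c' with ⟨x', rfl⟩ | ⟨y', rfl⟩
      · simp only [kapC_inl_inl, Sum.Lex.inl_le_inl_iff]
      · simp only [kapC_inl_inl, kapC_inl_inr]
        constructor <;> intro
        · exact Sum.Lex.inl_le_inl_iff.mpr (Sum.Lex.inl_le_inr _ _)
        · exact Sum.Lex.inl_le_inr _ _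
    · rw [prod_lex_eta p']
      simp only [kapC_inl_inl, kapC_inr]
      constructor <;> intro
      · exact Sum.Lex.inl_le_inr _ _
      · exact Sum.Lex.inl_le_inr _ _
    · rcases sum_lex_cases c' with ⟨x', rfl⟩ | ⟨y', rfl⟩
      · simp only [kapC_inl_inr, kapC_inl_inl]
        constructor <;> intro hc
        · exact absurd hc Sum.Lex.not_inr_le_inl
        · exact absurd (Sum.Lex.inl_le_inl_iff.mp hc) Sum.Lex.not_inr_le_inl
      · simp only [kapC_inl_inr, Sum.Lex.inr_le_inr_iff, Sum.Lex.inl_le_inl_iff,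
          Prod.Lex.le_iff, ofLex_toLex, lt_self_iff_false, false_or, true_and]
    · rw [prod_lex_eta p']
      simp only [kapC_inl_inr, kapC_inr, Sum.Lex.inr_le_inr_iff, Prod.Lex.le_iff, ofLex_toLex, Fin.lt_def,
        Fin.val_zero, Fin.val_succ, Fin.ext_iff]
      constructor <;> intro
      · exact Sum.Lex.inl_le_inr _ _
      · left
        omega
  case inr =>
    rcases sum_lex_cases w with ⟨c', rfl⟩ | ⟨p', rfl⟩
    · rcases sum_lex_cases c' with ⟨x', rfl⟩ | ⟨y', rfl⟩
      · rw [prod_lex_eta p]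
        simp only [kapC_inr, kapC_inl_inl]
        constructor <;> intro hc
        · exact absurd hc Sum.Lex.not_inr_le_inl
        · exact absurd hc Sum.Lex.not_inr_le_inl
      · rw [prod_lex_eta p]
        simp only [kapC_inr, kapC_inl_inr, Sum.Lex.inr_le_inr_iff, Prod.Lex.le_iff, ofLex_toLex, Fin.lt_def,
          Fin.val_zero, Fin.val_succ, Fin.ext_iff]
        constructor <;> intro hc
        · omega
        · exact absurd hc Sum.Lex.not_inr_le_inl
    · rw [prod_lex_eta p, prod_lex_eta p']
      simp only [kapC_inr, Sum.Lex.inr_le_inr_iff, Prod.Lex.le_iff, ofLex_toLex, Fin.lt_def,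
        Fin.val_succ, Fin.ext_iff]
      constructor <;> rintro (hc | ⟨he, hy⟩)
      · left; omega
      · right; exact ⟨by omega, hy⟩
      · left; omega
      · right; exact ⟨by omega, hy⟩

end Concrete

/-! ### The main chain of EF-equivalences -/

section Main

variable {X Y : Type u} [LinearOrder X] [LinearOrder Y]

theorem eC_eq (s j u : ℕ) (c : CC X Y j) :
    piC (s + j) u (toLex (Sum.inl (shiftC s j c))) = eC s j u c := by
  rcases sum_lex_cases c with ⟨x, rfl⟩ | ⟨p, rfl⟩
  · rfl
  · rw [prod_lex_eta p]
    rfl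

theorem hEF (h : IsElemInclusion Language.order X (X ⊕ₗ Y) fun x => toLex (Sum.inl x)) :
    ∀ (j n : ℕ) (xs : List X), EF (CC X Y j) X n (xs.map fun x => (inlC j x, x)) := by
  intro j
  induction j with
  | zero =>
    intro n xs
    have hsur : Function.Surjective (inlC (X := X) (Y := Y) 0) := by
      intro z
      rcases sum_lex_cases z with ⟨x, rfl⟩ | ⟨p, rfl⟩
      · exact ⟨x, rfl⟩
      · exact isEmptyElim (ofLex p).1
    have := EF.map_left (inlC (X := X) (Y := Y) 0) hsur (fun x y => Sum.Lex.inl_le_inl_iff) (EF.refl (n := n) xs)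
    simpa [List.map_map, Function.comp_def] using this
  | succ j ih =>
    intro n xs
    have hB := ef_of_elem h n xs
    have hE3 := EF.sumLex (B := Fin j ×ₗ Y) (B' := Fin j ×ₗ Y) hB (EF.refl [])
    simp only [List.map_nil, List.append_nil, List.map_map] at hE3
    have hmap := EF.map_left (kapC j) (kapC_surj j) (kapC_le j) hE3
    rw [List.map_map] at hmap
    have htr := EF.trans (n := n) (xs.map fun x => (inlC (X := X) (Y := Y) (j+1) x, inlC (X := X) (Y := Y) j x, x)) ?_ ?_
    · rw [List.map_map] at htr
      exact htr
    · rw [List.map_map]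
      exact hmap.sub (by
        intro q hq
        simp only [List.mem_map, Function.comp] at hq ⊢
        obtain ⟨x, hx, rfl⟩ := hq
        exact ⟨x, hx, rfl⟩)
    · rw [List.map_map]
      exact (ih n xs).sub (by
        intro q hq
        simp only [List.mem_map, Function.comp] at hq ⊢
        obtain ⟨x, hx, rfl⟩ := hq
        exact ⟨x, hx, rfl⟩)

theorem shiftEF (h : IsElemInclusion Language.order X (X ⊕ₗ Y) fun x => toLex (Sum.inl x))
    (s j n : ℕ) (cs : List (CC X Y j)) :
    EF (CC X Y (s + j)) (CC X Y j) n (cs.map fun c => (shiftC s j c, c)) := by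
  classical
  have hA := hEF h s n (cs.filterMap fun c => (ofLex c).getLeft?)
  have hBl := EF.refl (M := Fin j ×ₗ Y) (n := n) (cs.filterMap fun c => (ofLex c).getRight?)
  have hE3 := EF.sumLex hA hBl
  have hmap := EF.map_left (piC s j) (piC_surj s j) (piC_le s j) hE3
  refine hmap.sub ?_
  intro q hq
  simp only [List.mem_map] at hq
  obtain ⟨c, hc, rfl⟩ := hq
  simp only [List.map_append, List.map_map, List.mem_append, List.mem_map, Function.comp,
    List.mem_filterMap]
  rcases sum_lex_cases c with ⟨x, rfl⟩ | ⟨p, rfl⟩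
  · left
    refine ⟨x, ⟨toLex (Sum.inl x), hc, rfl⟩, ?_⟩
    rfl
  · right
    refine ⟨ofLex p, ⟨toLex (Sum.inr p), hc, rfl⟩, ?_⟩
    rw [prod_lex_eta p]
    rfl

theorem connC (h : IsElemInclusion Language.order X (X ⊕ₗ Y) fun x => toLex (Sum.inl x))
    (n s j u : ℕ) (l : List (CC X Y j × X)) (hl : EF (CC X Y j) X n l) :
    EF (CC X Y (s + j + u)) X n (l.map fun p => (eC s j u p.1, p.2)) := by
  have h1 : EF (CC X Y (s + j)) X n (l.map fun p => (shiftC s j p.1, p.2)) := by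
    have htr1 := EF.trans (n := n) (l.map fun p => (shiftC s j p.1, p.1, p.2))
      (by rw [List.map_map]
          have hsh := shiftEF h s j n (l.map Prod.fst)
          rw [List.map_map] at hsh
          exact hsh)
      (by rw [List.map_map]
          refine hl.sub ?_
          intro q hq
          simp only [List.mem_map, Function.comp] at hq
          obtain ⟨p, hp, rfl⟩ := hq
          exact hp)
    rw [List.map_map] at htr1
    exact htr1
  have h2 := EF.sumLex (B := Fin u ×ₗ Y) (B' := Fin u ×ₗ Y) h1 (EF.refl [])
  simp only [List.map_nil, List.append_nil, List.map_map] at h2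
  have h3 := EF.map_left (piC (s + j) u) (piC_surj (s + j) u) (piC_le (s + j) u) h2
  rw [List.map_map] at h3
  have h4 := hEF h u n (l.map Prod.snd)
  rw [List.map_map] at h4
  have htr := EF.trans (n := n) (l.map fun p => (eC s j u p.1, inlC (X := X) (Y := Y) u p.2, p.2))
    (by rw [List.map_map]
        refine h3.sub ?_
        intro q hq
        simp only [List.mem_map, Function.comp] at hq ⊢
        obtain ⟨p, hp, rfl⟩ := hq
        exact ⟨p, hp, by rw [← eC_eq s j u p.1]; rfl⟩)
    (by rw [List.map_map]
        refine h4.sub ?_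
        intro q hq
        simp only [List.mem_map, Function.comp] at hq ⊢
        obtain ⟨p, hp, rfl⟩ := hq
        exact ⟨p, hp, rfl⟩)
  rw [List.map_map] at htr
  exact htr

theorem masterC (h : IsElemInclusion Language.order X (X ⊕ₗ Y) fun x => toLex (Sum.inl x)) :
    ∀ (n j : ℕ) (o : ℤ) (l : List (CC X Y j × X)), EF (CC X Y j) X n l →
    EF (MM X Y) X n (l.map fun p => (embC j o p.1, p.2)) := by
  intro n
  induction n with
  | zero =>
    intro j o l hl p hp q hq
    simp only [List.mem_map] at hp hq
    obtain ⟨p₀, hp₀, rfl⟩ := hp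
    obtain ⟨q₀, hq₀, rfl⟩ := hq
    exact (embC_le j o _ _).trans (hl _ hp₀ _ hq₀)
  | succ n ih =>
    intro j o l hl
    constructor
    · intro a
      rcases sum_lex_cases a with ⟨x, rfl⟩ | ⟨p, rfl⟩
      · obtain ⟨b, hb⟩ := hl.1 (inlC j x)
        refine ⟨b, ?_⟩
        have := ih j o _ hb
        simpa [embC, inlC] using this
      · set z : ℤ := (ofLex p).1 with hz
        set y : Y := (ofLex p).2 with hy
        set s : ℕ := (-(z + o)).toNat with hs
        set o' : ℤ := o + s with ho'
        set u : ℕ := (z + o' + 1 - (s + j)).toNat with hu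
        have hge : 0 ≤ z + o' := by omega
        have hlt : (z + o').toNat < s + j + u := by omega
        set c' : CC X Y (s + j + u) := toLex (Sum.inr (toLex (⟨(z + o').toNat, hlt⟩, y)))
          with hc'
        have hl' := connC h (n + 1) s j u l hl
        obtain ⟨b, hb⟩ := hl'.1 c'
        refine ⟨b, ?_⟩
        have hres := ih (s + j + u) o' _ hb
        have hhead : embC (s + j + u) o' c' = toLex (Sum.inr p) := by
          have hval : ((((⟨(z + o').toNat, hlt⟩ : Fin (s + j + u)) : ℕ)) : ℤ) - o' = z := by
            simp only [Fin.val_mk]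
            omega
          conv_rhs => rw [prod_lex_eta p, ← hz, ← hy]
          rw [hc']
          show toLex (Sum.inr (toLex (((((⟨(z + o').toNat, hlt⟩ : Fin (s + j + u)) : ℕ)) : ℤ) - o', y)))
            = toLex (Sum.inr (toLex (z, y)))
          rw [hval]
        have hrest : (l.map fun p => (eC s j u p.1, p.2)).map
            (fun p => (embC (s + j + u) o' p.1, p.2)) = l.map fun p => (embC j o p.1, p.2) := by
          rw [List.map_map]
          congr 1
          funext q
          show (embC (s + j + u) (o + s) (eC s j u q.1), q.2) = (embC j o q.1, q.2)
          rw [embC_compat]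
        have : ((embC (s + j + u) o' c', b) ::
            (l.map fun p => (eC s j u p.1, p.2)).map (fun p => (embC (s + j + u) o' p.1, p.2)))
            = ((toLex (Sum.inr p), b) :: l.map fun p => (embC j o p.1, p.2)) := by
          rw [hhead, hrest]
        rw [← this]
        simpa using hres
    · intro b
      obtain ⟨c, hc⟩ := hl.2 b
      refine ⟨embC j o c, ?_⟩
      have := ih j o _ hc
      simpa using this

end Main

end StmtAux

/-- If the natural inclusion of `X` into `X + Y` is elementary (with `Y` non-empty), then so is
the natural inclusion of `X` into `X + Σ_ζ Y`, where `Σ_ζ Y` is the sum of ℤ-many copies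
of `Y`. -/
theorem stmt4 (X Y : Type u) [LinearOrder X] [LinearOrder Y] (hY : Nonempty Y)
    (h : IsElemInclusion Language.order X (X ⊕ₗ Y) (fun x => toLex (Sum.inl x))) :
    IsElemInclusion Language.order X (X ⊕ₗ (ℤ ×ₗ Y)) (fun x => toLex (Sum.inl x)) := by
  intro n φ v
  classical
  have hbase := StmtAux.hEF h 0 (StmtAux.qr φ) (List.ofFn v)
  have hef := StmtAux.masterC h (StmtAux.qr φ) 0 0 _ hbase
  rw [List.map_map] at hef
  refine StmtAux.realize_iff_of_EF φ le_rfl hef ?_ ?_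
  · intro i
    simp only [List.mem_map, List.mem_ofFn, Function.comp]
    exact ⟨v i, ⟨i, rfl⟩, rfl⟩
  · intro i
    exact isEmptyElim i
end

section
/- Consider an exact sequence of abelian groups 0 → A → B → C → 0 in which A is pure in B (every element of A that is n-divisible in B is n-divisible in A, for every n) and A is ℵ₁-saturated as a first-order structure. Then the sequence splits: B ≅ A × C. -/
open FirstOrder Language

universe u

/-- Function symbols of the language of abelian groups: a constant `0` and a binary `+`. -/
def abFunctions : ℕ → Type
  | 0 => Unit
  | 2 => Unit
  | _ => Empty

/-- The first-order language `{+, 0}` of abelian groups. -/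
def abLang : FirstOrder.Language := ⟨abFunctions, fun _ => Empty⟩

/-- Any additive group is naturally an `abLang`-structure. -/
instance abStructure (M : Type*) [AddCommGroup M] : abLang.Structure M where
  funMap := fun {n} f x =>
    match n, f, x with
    | 0, _, _ => 0
    | 1, f, _ => f.elim
    | 2, _, x => x 0 + x 1
    | (_ + 3), f, _ => f.elim
  RelMap := fun r _ => r.elim

/-- `M` is `ℵ₁`-saturated: every finitely satisfiable set of formulas in one free variable with
countably many parameters from `M` is realized in `M`. -/
def AlephOneSaturated (L : FirstOrder.Language) (M : Type*) [L.Structure M] : Prop :=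
  ∀ (α : Type) (_ : Countable α) (xs : α → M) (S : Set (L.Formula (α ⊕ Unit))),
    (∀ F : Finset (L.Formula (α ⊕ Unit)), ↑F ⊆ S →
        ∃ m : M, ∀ φ ∈ F, φ.Realize (Sum.elim xs fun _ => m)) →
      ∃ m : M, ∀ φ ∈ S, φ.Realize (Sum.elim xs fun _ => m)

namespace Stmt7Aux

/-! ### Terms and formulas in the language of abelian groups -/

def zeroF : abLang.Functions 0 := ()
def addF : abLang.Functions 2 := ()

variable {γ : Type*}

def tzero : abLang.Term γ := Term.func zeroF ![]
def tadd (t₁ t₂ : abLang.Term γ) : abLang.Term γ := Term.func addF ![t₁, t₂]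
def tnsmul : ℕ → abLang.Term γ → abLang.Term γ
  | 0, _ => tzero
  | n+1, t => tadd t (tnsmul n t)
def tsum {V : ℕ} (g : Fin V → abLang.Term γ) : abLang.Term γ :=
  (List.finRange V).foldr (fun j acc => tadd (g j) acc) tzero

section Realize
variable {M : Type*} [AddCommGroup M] (v : γ → M)

@[simp] theorem realize_tzero : Term.realize v (tzero : abLang.Term γ) = 0 := rfl

@[simp] theorem realize_tadd (t₁ t₂ : abLang.Term γ) :
    Term.realize v (tadd t₁ t₂) = Term.realize v t₁ + Term.realize v t₂ := rfl

@[simp] theorem realize_tnsmul (n : ℕ) (t : abLang.Term γ) :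
    Term.realize v (tnsmul n t) = n • Term.realize v t := by
  induction n with
  | zero => simp [tnsmul]
  | succ n ih => rw [tnsmul, realize_tadd, ih, succ_nsmul]; abel

@[simp] theorem realize_tsum {V : ℕ} (g : Fin V → abLang.Term γ) :
    Term.realize v (tsum g) = ∑ j, Term.realize v (g j) := by
  rw [tsum, Fin.sum_univ_def]
  induction (List.finRange V) with
  | nil => simp
  | cons a l ih => simp [List.foldr, ih]

theorem toNat_smul_sub (z : ℤ) (m : M) : z.toNat • m - (-z).toNat • m = z • m := by
  rcases le_or_gt 0 z with h | h
  · rw [show (-z).toNat = 0 by omega, ← natCast_zsmul m z.toNat, Int.toNat_of_nonneg h]; simp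
  · rw [show z.toNat = 0 by omega, ← natCast_zsmul m (-z).toNat,
      Int.toNat_of_nonneg (by omega : (0:ℤ) ≤ -z)]
    simp

theorem iff_helper (p p' s s' q q' c kY S nm : M)
    (hp : p - p' = kY) (hs : s' - s = S) (hq : q' - q = nm) :
    p + (s + q) = p' + (s' + (q' + c)) ↔ kY = S + (nm + c) := by
  subst hp hs hq
  constructor <;> intro h
  · rw [← sub_eq_zero] at h ⊢; rw [← h]; abel
  · rw [← sub_eq_zero] at h ⊢; rw [← h]; abel

end Realize

section Formulas
variable {α : Type}

/-- the formula `k • y_r = ∑ j, v j • x_j + (nn • a + c_p)` -/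
def rowFormula (V R : ℕ) (k : ℤ) (vv : Fin V → ℤ) (nn : ℤ) (p : α) (r : Fin R) :
    abLang.BoundedFormula (α ⊕ Unit) (V + R) :=
  Term.bdEqual
    (tadd (tnsmul k.toNat (Term.var (Sum.inr (Fin.natAdd V r))))
      (tadd (tsum fun j => tnsmul (-(vv j)).toNat (Term.var (Sum.inr (Fin.castAdd R j))))
        (tnsmul (-nn).toNat (Term.var (Sum.inl (Sum.inr ()))))))
    (tadd (tnsmul (-k).toNat (Term.var (Sum.inr (Fin.natAdd V r))))
      (tadd (tsum fun j => tnsmul (vv j).toNat (Term.var (Sum.inr (Fin.castAdd R j))))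
        (tadd (tnsmul nn.toNat (Term.var (Sum.inl (Sum.inr ()))))
          (Term.var (Sum.inl (Sum.inl p))))))

theorem realize_rowFormula {M : Type*} [AddCommGroup M]
    (V R : ℕ) (k : ℤ) (vv : Fin V → ℤ) (nn : ℤ) (p : α) (r : Fin R)
    (vfree : α ⊕ Unit → M) (xy : Fin (V + R) → M) :
    (rowFormula V R k vv nn p r).Realize vfree xy ↔
      k • xy (Fin.natAdd V r) =
        (∑ j, vv j • xy (Fin.castAdd R j)) + (nn • vfree (Sum.inr ()) + vfree (Sum.inl p)) := by
  rw [rowFormula, BoundedFormula.realize_bdEqual]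
  simp only [realize_tadd, realize_tnsmul, realize_tsum, Term.realize_var, Sum.elim_inl,
    Sum.elim_inr]
  exact iff_helper _ _ _ _ _ _ _ _ _ _ (toNat_smul_sub _ _)
    (by rw [← Finset.sum_sub_distrib]; exact Finset.sum_congr rfl fun j _ => toNat_smul_sub _ _)
    (toNat_smul_sub _ _)

theorem realize_foldr_inf {L : FirstOrder.Language} {M : Type*} [L.Structure M] {n : ℕ}
    {β : Type*} (l : List β) (F : β → L.BoundedFormula α n) (v : α → M) (xs : Fin n → M) :
    ((l.foldr (fun b acc => F b ⊓ acc) ⊤).Realize v xs) ↔ ∀ b ∈ l, (F b).Realize v xs := by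
  induction l with
  | nil => simp
  | cons b l ih => simp [ih]

end Formulas

/-! ### Systems of equations -/

/-- Index data for a finite system of equations: `V` variables, `R` rows, each row
`(k, v, n)` standing for `k • y = ∑ v j • x j + (n • a + c)`. -/
def SysIdx : Type := Σ V R : ℕ, Fin R → ℤ × (Fin V → ℤ) × ℤ

instance : Countable SysIdx := by unfold SysIdx; infer_instance

/-- Solvability of the system `t` in `M` with distinguished element `aval` and constants `cs`. -/
def SolW {M : Type*} [AddCommGroup M] (t : SysIdx) (aval : M) (cs : Fin t.2.1 → M) : Prop :=
  ∃ x : Fin t.1 → M, ∀ r, ∃ y : M,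
    (t.2.2 r).1 • y = (∑ j, (t.2.2 r).2.1 j • x j) + ((t.2.2 r).2.2 • aval + cs r)

/-- The formula expressing `SolW t a cs` where the parameters are indexed by `(t, r)`. -/
def sysFormula (t : SysIdx) : abLang.Formula ((SysIdx × ℕ) ⊕ Unit) :=
  ((List.finRange t.2.1).foldr
    (fun r acc =>
      rowFormula t.1 t.2.1 (t.2.2 r).1 (t.2.2 r).2.1 (t.2.2 r).2.2 (t, (r : ℕ)) r ⊓ acc) ⊤).exs

theorem realize_sysFormula {M : Type*} [AddCommGroup M] (t : SysIdx)
    (vfree : (SysIdx × ℕ) ⊕ Unit → M) :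
    (sysFormula t).Realize vfree ↔
      SolW t (vfree (Sum.inr ())) (fun r => vfree (Sum.inl (t, (r : ℕ)))) := by
  rw [sysFormula, BoundedFormula.realize_exs]
  constructor
  · rintro ⟨xy, hxy⟩
    rw [realize_foldr_inf] at hxy
    refine ⟨fun j => xy (Fin.castAdd _ j), fun r => ⟨xy (Fin.natAdd _ r), ?_⟩⟩
    have := (realize_rowFormula _ _ _ _ _ _ _ _ _).1 (hxy r (List.mem_finRange r))
    exact this
  · rintro ⟨x, hx⟩
    choose y hy using hx
    refine ⟨Fin.addCases x y, ?_⟩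
    rw [realize_foldr_inf]
    intro r _
    rw [realize_rowFormula]
    simpa using hy r


/-! ### Purity for systems (via Smith normal form) -/

section Pure
variable {A B : Type u} [AddCommGroup A] [AddCommGroup B]

theorem zpure (i : A →+ B) (hpure : ∀ (n : ℕ) (a : A), (∃ b : B, n • b = i a) → ∃ a' : A, n • a' = a)
    (z : ℤ) (a : A) (h : ∃ b : B, z • b = i a) : ∃ a' : A, z • a' = a := by
  obtain ⟨b, hb⟩ := h
  rcases le_or_gt 0 z with hz | hz
  · obtain ⟨a', ha'⟩ := hpure z.toNat a ⟨b, by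
      rwa [← natCast_zsmul b z.toNat, Int.toNat_of_nonneg hz]⟩
    exact ⟨a', by rwa [← natCast_zsmul a' z.toNat, Int.toNat_of_nonneg hz] at ha'⟩
  · obtain ⟨a', ha'⟩ := hpure (-z).toNat a ⟨-b, by
      rw [← natCast_zsmul (-b) (-z).toNat, Int.toNat_of_nonneg (by omega : (0:ℤ) ≤ -z)]
      rw [smul_neg, neg_smul] at *; simpa using hb⟩
    refine ⟨-a', ?_⟩
    rw [← natCast_zsmul a' (-z).toNat, Int.toNat_of_nonneg (by omega : (0:ℤ) ≤ -z)] at ha'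
    rw [smul_neg, ← neg_smul]
    exact ha'

set_option maxHeartbeats 1000000 in
theorem pure_systems (i : A →+ B) (hi : Function.Injective i)
    (hpure : ∀ (n : ℕ) (a : A), (∃ b : B, n • b = i a) → ∃ a' : A, n • a' = a)
    (V R : Type) [Fintype V] [Fintype R] (k : R → ℤ) (v : R → V → ℤ)
    (c : R → A)
    (hB : ∃ x : V → B, ∀ r, ∃ y : B, k r • y = (∑ j, v r j • x j) + i (c r)) :
    ∃ x : V → A, ∀ r, ∃ y : A, k r • y = (∑ j, v r j • x j) + c r := by
  classical
  obtain ⟨x, hx⟩ := hB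
  choose y hy using hx
  set W := V ⊕ R with hW
  let bW : Module.Basis W ℤ (W → ℤ) := Pi.basisFun ℤ W
  let bR : Module.Basis R ℤ (R → ℤ) := Pi.basisFun ℤ R
  let μ : (R → ℤ) →ₗ[ℤ] (W → ℤ) :=
    bR.constr ℤ (fun r => k r • bW (Sum.inr r) - ∑ j, v r j • bW (Sum.inl j))
  let φ : (W → ℤ) →ₗ[ℤ] B := bW.constr ℤ (Sum.elim x y)
  let g : (R → ℤ) →ₗ[ℤ] A := bR.constr ℤ c
  let iL := i.toIntLinearMap
  have hcomm : φ.comp μ = iL.comp g := by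
    apply bR.ext
    intro r
    simp only [LinearMap.comp_apply, μ, g, Module.Basis.constr_basis, map_sub, map_smul, map_sum]
    simp only [φ, Module.Basis.constr_basis, Sum.elim_inr, Sum.elim_inl]
    rw [hy r]
    simp [iL]
  have hcomm' : ∀ w, φ (μ w) = i (g w) := by
    intro w
    have := LinearMap.congr_fun hcomm w
    simpa [iL] using this
  set N := LinearMap.range μ with hN
  have hkerg : ∀ w, μ w = 0 → g w = 0 := by
    intro w hw
    apply hi
    rw [← hcomm' w, hw, map_zero, map_zero]
  obtain ⟨n, bM, bN, σ, d, hsnf⟩ := N.smithNormalForm bW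
  have hmem : ∀ idx : Fin n, ↑(bN idx) ∈ N := fun idx => (bN idx).2
  let pre : Fin n → (R → ℤ) := fun idx => (hmem idx).choose
  have hpre : ∀ idx, μ (pre idx) = ↑(bN idx) := fun idx => (hmem idx).choose_spec
  let s : N →ₗ[ℤ] (R → ℤ) := bN.constr ℤ pre
  have hs : ∀ ν : N, μ (s ν) = ↑ν := by
    intro ν
    have : μ.comp s = N.subtype := by
      apply bN.ext
      intro idx
      simp only [LinearMap.comp_apply, s, Module.Basis.constr_basis, Submodule.coe_subtype]
      exact hpre idx
    exact LinearMap.congr_fun this ν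
  let h : N →ₗ[ℤ] A := g.comp s
  have hfact : ∀ (w : R → ℤ) (hw : μ w ∈ N), h ⟨μ w, hw⟩ = g w := by
    intro w hw
    have h1 : μ (s ⟨μ w, hw⟩) = μ w := hs _
    have h2 : μ (s ⟨μ w, hw⟩ - w) = 0 := by rw [map_sub, h1, sub_self]
    have h3 := hkerg _ h2
    rw [map_sub] at h3
    have : g (s ⟨μ w, hw⟩) = g w := by rwa [sub_eq_zero] at h3
    simpa [h] using this
  have hih : ∀ ν : N, i (h ν) = φ ↑ν := by
    rintro ⟨nu, w, hw⟩
    subst hw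
    rw [hfact w ⟨w, rfl⟩, ← hcomm' w]
  have hdiv : ∀ idx : Fin n, ∃ a' : A, d idx • a' = h (bN idx) := by
    intro idx
    apply zpure i hpure
    refine ⟨φ (bM (σ idx)), ?_⟩
    rw [hih (bN idx), hsnf idx, map_smul]
  choose al hal using hdiv
  let ψ : (W → ℤ) →ₗ[ℤ] A :=
    bM.constr ℤ (fun w => if hw : ∃ idx, σ idx = w then al hw.choose else 0)
  have hψN : ∀ ν : N, ψ ↑ν = h ν := by
    intro ν
    have : ψ.comp N.subtype = h := by
      apply bN.ext
      intro idx
      simp only [LinearMap.comp_apply, Submodule.coe_subtype]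
      rw [hsnf idx, map_smul]
      have hex : ∃ idx', σ idx' = σ idx := ⟨idx, rfl⟩
      have : ψ (bM (σ idx)) = al idx := by
        simp only [ψ, Module.Basis.constr_basis]
        rw [dif_pos hex]
        congr 1
        exact σ.injective hex.choose_spec
      rw [this, hal idx]
    exact LinearMap.congr_fun this ν
  refine ⟨fun j => ψ (bW (Sum.inl j)), fun r => ⟨ψ (bW (Sum.inr r)), ?_⟩⟩
  have h1 : ψ (μ (bR r)) = g (bR r) := by
    have h0 : ψ (μ (bR r)) = h ⟨μ (bR r), ⟨bR r, rfl⟩⟩ := hψN ⟨μ (bR r), ⟨bR r, rfl⟩⟩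
    rw [h0]; exact hfact _ _
  have h2 : g (bR r) = c r := by simp [g, Module.Basis.constr_basis]
  have h3 : μ (bR r) = k r • bW (Sum.inr r) - ∑ j, v r j • bW (Sum.inl j) := by
    simp [μ, Module.Basis.constr_basis]
  rw [h3, map_sub, map_smul, map_sum, h2] at h1
  simp only [map_smul] at h1
  rw [sub_eq_iff_eq_add] at h1
  rw [h1]
  abel

end Pure

/-! ### Partial retractions -/

/-- A partial retraction: a subgroup `G` of `B` containing the image of `i`, together with
a homomorphism `G →+ A` restricting to the inverse of `i`, satisfying the purity invariant
for finite systems of equations. -/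
structure PartRetr {A B : Type u} [AddCommGroup A] [AddCommGroup B] (i : A →+ B) where
  G : AddSubgroup B
  f : ↥G →+ A
  mem' : ∀ a : A, i a ∈ G
  comp' : ∀ (a : A) (h : i a ∈ G), f ⟨i a, h⟩ = a
  inv' : ∀ (V R : Type) [Fintype V] [Fintype R], ∀ (k : R → ℤ) (v : R → V → ℤ) (c : R → ↥G),
    (∃ x : V → B, ∀ r, ∃ y : B, k r • y = (∑ j, v r j • x j) + ((c r : B))) →
    ∃ x : V → A, ∀ r, ∃ y : A, k r • y = (∑ j, v r j • x j) + f (c r)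

namespace PartRetr

variable {A B : Type u} [AddCommGroup A] [AddCommGroup B] {i : A →+ B}

/-- The extension order on partial retractions. -/
def le (p q : PartRetr i) : Prop :=
  ∃ h : p.G ≤ q.G, ∀ (x : B) (hx : x ∈ p.G), q.f ⟨x, h hx⟩ = p.f ⟨x, hx⟩

theorem le_refl (p : PartRetr i) : le p p := ⟨le_rfl, fun _ _ => rfl⟩

theorem le_trans {p q r : PartRetr i} (h1 : le p q) (h2 : le q r) : le p r := by
  obtain ⟨hG1, hf1⟩ := h1
  obtain ⟨hG2, hf2⟩ := h2
  exact ⟨hG1.trans hG2, fun x hx => (hf2 x (hG1 hx)).trans (hf1 x hx)⟩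

/-- The base partial retraction defined on the image of `i`. -/
noncomputable def base (hi : Function.Injective i)
    (hpure : ∀ (n : ℕ) (a : A), (∃ b : B, n • b = i a) → ∃ a' : A, n • a' = a) :
    PartRetr i where
  G := i.range
  f := (AddMonoidHom.ofInjective hi).symm.toAddMonoidHom
  mem' := fun a => ⟨a, rfl⟩
  comp' := by
    intro a h
    apply hi
    exact AddMonoidHom.apply_ofInjective_symm hi ⟨i a, h⟩
  inv' := by
    intro V R _ _ k v c hB
    have key : ∀ r, i ((AddMonoidHom.ofInjective hi).symm.toAddMonoidHom (c r)) = ↑(c r) :=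
      fun r => AddMonoidHom.apply_ofInjective_symm hi (c r)
    apply pure_systems i hi hpure
    obtain ⟨x, hx⟩ := hB
    refine ⟨x, fun r => ?_⟩
    rw [key r]
    exact hx r

section Chain

variable (hi : Function.Injective i)

/-- Upper bound of a finite collection inside a chain. -/
theorem chain_finite_bound {ch : Set (PartRetr i)} (hch : IsChain le ch)
    (l : List (PartRetr i)) (hl : ∀ p ∈ l, p ∈ ch) (p₀ : PartRetr i) (hp₀ : p₀ ∈ ch) :
    ∃ q ∈ ch, ∀ p ∈ l, le p q := by
  induction l with
  | nil => exact ⟨p₀, hp₀, by simp⟩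
  | cons p l ih =>
    obtain ⟨q, hq, hq'⟩ := ih (fun x hx => hl x (List.mem_cons_of_mem _ hx))
    have hp : p ∈ ch := hl p List.mem_cons_self
    rcases eq_or_ne p q with rfl | hne
    · exact ⟨p, hp, fun x hx => by
        rcases List.mem_cons.1 hx with rfl | hx
        · exact le_refl _
        · exact hq' x hx⟩
    · rcases hch hp hq hne with h | h
      · exact ⟨q, hq, fun x hx => by
          rcases List.mem_cons.1 hx with rfl | hx
          · exact h
          · exact hq' x hx⟩
      · exact ⟨p, hp, fun x hx => by
          rcases List.mem_cons.1 hx with rfl | hx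
          · exact le_refl _
          · exact le_trans (hq' x hx) h⟩

/-- Every chain of partial retractions has an upper bound. -/
theorem chain_bound (hi : Function.Injective i)
    (hpure : ∀ (n : ℕ) (a : A), (∃ b : B, n • b = i a) → ∃ a' : A, n • a' = a)
    (ch : Set (PartRetr i)) (hch : IsChain le ch) :
    ∃ ub : PartRetr i, ∀ p ∈ ch, le p ub := by
  classical
  rcases Set.eq_empty_or_nonempty ch with rfl | ⟨p₀, hp₀⟩
  · exact ⟨base hi hpure, by simp⟩
  haveI : Nonempty ↥ch := ⟨⟨p₀, hp₀⟩⟩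
  -- the union subgroup
  have hdir : Directed (· ≤ ·) (fun p : ↥ch => p.1.G) := by
    intro p q
    rcases eq_or_ne p q with rfl | hne
    · exact ⟨p, le_rfl, le_rfl⟩
    rcases hch p.2 q.2 (fun h => hne (Subtype.ext h)) with h | h
    · exact ⟨q, h.1, le_rfl⟩
    · exact ⟨p, le_rfl, h.1⟩
  set Gs : AddSubgroup B := ⨆ p : ↥ch, p.1.G with hGs
  have hmem_iff : ∀ x : B, x ∈ Gs ↔ ∃ p : ↥ch, x ∈ p.1.G := by
    intro x
    rw [hGs]
    exact AddSubgroup.mem_iSup_of_directed hdir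
  -- the glued function
  have hex : ∀ x : ↥Gs, ∃ p : ↥ch, (x : B) ∈ p.1.G := fun x => (hmem_iff x).1 x.2
  let pk : ↥Gs → ↥ch := fun x => (hex x).choose
  have hpk : ∀ x : ↥Gs, (x : B) ∈ (pk x).1.G := fun x => (hex x).choose_spec
  let fv : ↥Gs → A := fun x => (pk x).1.f ⟨x, hpk x⟩
  -- agreement
  have agree : ∀ (p : ↥ch) (x : ↥Gs) (hx : (x : B) ∈ p.1.G), fv x = p.1.f ⟨x, hx⟩ := by
    intro p x hx
    rcases eq_or_ne (pk x) p with h | hne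
    · simp only [fv]
      cases h
      rfl
    · rcases hch (pk x).2 p.2 (fun h => hne (Subtype.ext h)) with h | h
      · obtain ⟨hG, hf⟩ := h
        exact (hf x (hpk x)).symm
      · obtain ⟨hG, hf⟩ := h
        exact hf x hx
  have fv_add : ∀ x y : ↥Gs, fv (x + y) = fv x + fv y := by
    intro x y
    obtain ⟨q, hq, hle⟩ := chain_finite_bound hch [(pk x).1, (pk y).1, (pk (x+y)).1]
      (by rintro p hp; simp only [List.mem_cons, List.mem_singleton] at hp
          rcases hp with rfl | rfl | rfl | h
          · exact (pk x).2
          · exact (pk y).2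
          · exact (pk (x+y)).2
          · exact absurd h (by simp)) p₀ hp₀
    have hx : (x : B) ∈ q.G := (hle _ (by simp)).1 (hpk x)
    have hy : (y : B) ∈ q.G := (hle _ (by simp)).1 (hpk y)
    have hxy : ((x + y : ↥Gs) : B) ∈ q.G := by
      have : (x : B) + y ∈ q.G := q.G.add_mem hx hy
      simpa using this
    rw [agree ⟨q, hq⟩ x hx, agree ⟨q, hq⟩ y hy, agree ⟨q, hq⟩ (x+y) hxy]
    rw [← map_add]
    congr 1
  let F : ↥Gs →+ A := AddMonoidHom.mk' fv fv_add
  refine ⟨⟨Gs, F, ?_, ?_, ?_⟩, ?_⟩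
  · intro a
    exact (hmem_iff _).2 ⟨⟨p₀, hp₀⟩, p₀.mem' a⟩
  · intro a h
    have h' : i a ∈ p₀.G := p₀.mem' a
    have := agree ⟨p₀, hp₀⟩ ⟨i a, h⟩ h'
    simpa [F, p₀.comp' a h'] using this
  · intro V R _ _ k v c hB
    -- find a common chain member containing all constants
    obtain ⟨q, hq, hle⟩ := chain_finite_bound hch ((List.finRange (Fintype.card R)).map
        (fun ridx => (pk (c ((Fintype.equivFin R).symm ridx))).1))
      (by intro p hp
          simp only [List.mem_map] at hp
          obtain ⟨ridx, _, rfl⟩ := hp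
          exact (pk _).2) p₀ hp₀
    have hcq : ∀ r, (c r : B) ∈ q.G := by
      intro r
      have hmem := List.mem_map_of_mem
        (f := fun ridx => (pk (c ((Fintype.equivFin R).symm ridx))).1)
        (List.mem_finRange ((Fintype.equivFin R) r))
      simp only [Equiv.symm_apply_apply] at hmem
      have := hle _ hmem
      exact this.1 (hpk (c r))
    obtain ⟨x, hx⟩ := q.inv' V R k v (fun r => ⟨c r, hcq r⟩) (by simpa using hB)
    refine ⟨x, fun r => ?_⟩
    have := agree ⟨q, hq⟩ (c r) (hcq r)
    rw [show F (c r) = q.f ⟨c r, hcq r⟩ from this]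
    exact hx r
  · intro p hp
    have hle : p.G ≤ Gs := by
      intro x hx
      exact (hmem_iff x).2 ⟨⟨p, hp⟩, hx⟩
    exact ⟨hle, fun x hx => agree ⟨p, hp⟩ ⟨x, hle hx⟩ hx⟩

end Chain

section Extend

/-- Coefficients for the combined system used for finite satisfiability. -/
def starCoef {σ : Type} [DecidableEq σ] (Vf : σ → ℕ) (φ0 : σ) (nn : ℤ)
    (vcoef : Fin (Vf φ0) → ℤ) : Option (Σ φ', Fin (Vf φ')) → ℤ
  | none => nn
  | some w' => if h : w'.1 = φ0 then vcoef (h ▸ w'.2) else 0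

theorem sum_starCoef {M : Type u} [AddCommGroup M] {σ : Type} [Fintype σ] [DecidableEq σ]
    (Vf : σ → ℕ) (φ0 : σ) (nn : ℤ) (vcoef : Fin (Vf φ0) → ℤ)
    (xv : Option (Σ φ', Fin (Vf φ')) → M) :
    (∑ w : Option (Σ φ', Fin (Vf φ')), starCoef Vf φ0 nn vcoef w • xv w)
      = nn • xv none + ∑ j, vcoef j • xv (some ⟨φ0, j⟩) := by
  rw [Fintype.sum_option]
  congr 1
  rw [← Finset.univ_sigma_univ, Finset.sum_sigma]
  rw [Finset.sum_eq_single_of_mem φ0 (Finset.mem_univ _)]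
  · apply Finset.sum_congr rfl
    intro j _
    simp [starCoef]
  · intro φ' _ hne
    apply Finset.sum_eq_zero
    intro j _
    simp only [starCoef]
    rw [dif_neg hne, zero_smul]

theorem extend (hi : Function.Injective i)
    (hsat : AlephOneSaturated abLang A)
    (m : PartRetr i) (b : B) (hb : b ∉ m.G) :
    ∃ p : PartRetr i, le m p ∧ b ∈ p.G := by
  classical
  -- the set of solvable systems, with witnesses in `m.G`
  set D : Set SysIdx := {t | ∃ cw : Fin t.2.1 → ↥m.G, SolW t b (fun r => ((cw r : B)))} with hD
  have hwit : ∀ t ∈ D, ∃ cw : Fin t.2.1 → ↥m.G, SolW t b (fun r => ((cw r : B))) := fun t ht => ht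
  let wit : ∀ t : SysIdx, t ∈ D → (Fin t.2.1 → ↥m.G) := fun t ht => (hwit t ht).choose
  have hwit' : ∀ (t : SysIdx) (ht : t ∈ D), SolW t b (fun r => ((wit t ht r : B))) :=
    fun t ht => (hwit t ht).choose_spec
  -- parameters
  let xs : SysIdx × ℕ → A := fun p =>
    if h : p.1 ∈ D then
      (if hr : p.2 < p.1.2.1 then m.f (wit p.1 h ⟨p.2, hr⟩) else 0)
    else 0
  have hxs : ∀ (t : SysIdx) (ht : t ∈ D) (r : Fin t.2.1), xs (t, (r : ℕ)) = m.f (wit t ht r) := by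
    intro t ht r
    simp only [xs]
    rw [dif_pos ht, dif_pos r.2]
  -- finite satisfiability
  have hfin : ∀ F : Finset (abLang.Formula ((SysIdx × ℕ) ⊕ Unit)), ↑F ⊆ sysFormula '' D →
      ∃ mm : A, ∀ φ ∈ F, φ.Realize (Sum.elim xs fun _ => mm) := by
    intro F hF
    have hpre : ∀ φ : {φ // φ ∈ F}, ∃ t, t ∈ D ∧ sysFormula t = φ := by
      rintro ⟨φ, hφ⟩
      obtain ⟨t, ht, hte⟩ := hF hφ
      exact ⟨t, ht, hte⟩
    choose tf htfD htfE using hpre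
    have hsol : ∀ φ0 : {φ // φ ∈ F}, SolW (tf φ0) b (fun r => ((wit _ (htfD φ0) r : B))) :=
      fun φ0 => hwit' _ (htfD φ0)
    choose xφ hxφ using hsol
    -- combined system
    have hBsolv : ∃ x : Option (Σ φ' : {φ // φ ∈ F}, Fin (tf φ').1) → B,
        ∀ rr : Σ φ0 : {φ // φ ∈ F}, Fin (tf φ0).2.1, ∃ y : B,
        ((tf rr.1).2.2 rr.2).1 • y =
          (∑ w, starCoef (fun φ0 => (tf φ0).1) rr.1 ((tf rr.1).2.2 rr.2).2.2
              ((tf rr.1).2.2 rr.2).2.1 w • x w)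
            + ((wit _ (htfD rr.1) rr.2 : B)) := by
      refine ⟨fun w => Option.rec b (fun w' => xφ w'.1 w'.2) w, ?_⟩
      rintro ⟨φ0, r⟩
      obtain ⟨y, hy⟩ := hxφ φ0 r
      refine ⟨y, ?_⟩
      rw [sum_starCoef]
      rw [hy]
      abel
    obtain ⟨xA, hxA⟩ := m.inv' _ _
      (fun rr : Σ φ0 : {φ // φ ∈ F}, Fin (tf φ0).2.1 => ((tf rr.1).2.2 rr.2).1)
      (fun rr => starCoef (fun φ0 => (tf φ0).1) rr.1 ((tf rr.1).2.2 rr.2).2.2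
          ((tf rr.1).2.2 rr.2).2.1)
      (fun rr => wit _ (htfD rr.1) rr.2) hBsolv
    refine ⟨xA none, ?_⟩
    intro φ hφ
    have hE : sysFormula (tf ⟨φ, hφ⟩) = φ := htfE ⟨φ, hφ⟩
    rw [← hE, realize_sysFormula]
    refine ⟨fun j => xA (some ⟨⟨φ, hφ⟩, j⟩), fun r => ?_⟩
    obtain ⟨y, hy⟩ := hxA ⟨⟨φ, hφ⟩, r⟩
    rw [sum_starCoef] at hy
    refine ⟨y, ?_⟩
    simp only [Sum.elim_inl, Sum.elim_inr]
    rw [hxs _ (htfD ⟨φ, hφ⟩) r]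
    rw [hy]
    abel
  -- saturation
  obtain ⟨a, ha⟩ := hsat (SysIdx × ℕ) inferInstance xs (sysFormula '' D) hfin
  have hA : ∀ (t : SysIdx) (ht : t ∈ D), SolW t a (fun r => m.f (wit t ht r)) := by
    intro t ht
    have := ha (sysFormula t) ⟨t, ht, rfl⟩
    rw [realize_sysFormula] at this
    simp only [Sum.elim_inl, Sum.elim_inr] at this
    obtain ⟨x, hx⟩ := this
    refine ⟨x, fun r => ?_⟩
    obtain ⟨y, hy⟩ := hx r
    exact ⟨y, hy.trans (by simp only [hxs t ht r])⟩
  -- key compatibility: n • b ∈ G forces the value n • a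
  have P1 : ∀ (nz : ℤ) (h : nz • b ∈ m.G), m.f ⟨nz • b, h⟩ = nz • a := by
    intro nz h
    have ht : (⟨0, 1, fun _ => ((0 : ℤ), (fun j => (0:ℤ)), nz)⟩ : SysIdx) ∈ D := by
      refine ⟨fun _ => ⟨-(nz • b), neg_mem h⟩, fun j => j.elim0, fun r => ⟨0, ?_⟩⟩
      simp
    set t : SysIdx := ⟨0, 1, fun _ => ((0 : ℤ), (fun j => (0:ℤ)), nz)⟩ with hT
    -- the chosen witness is forced
    have hforced : ((wit t ht ⟨0, one_pos⟩ : B)) = -(nz • b) := by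
      obtain ⟨xw, hxw⟩ := hwit' t ht
      obtain ⟨y, hy⟩ := hxw ⟨0, one_pos⟩
      simp only [hT, t, zero_smul, Finset.univ_eq_empty, Finset.sum_empty, zero_add] at hy
      exact (neg_eq_of_add_eq_zero_right hy.symm).symm
    obtain ⟨x, hx⟩ := hA t ht
    obtain ⟨y, hy⟩ := hx ⟨0, one_pos⟩
    simp only [hT, t, zero_smul, Finset.univ_eq_empty, Finset.sum_empty, zero_add] at hy
    have hwv : wit t ht ⟨0, one_pos⟩ = -(⟨nz • b, h⟩ : ↥m.G) := by
      apply Subtype.ext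
      simpa using hforced
    rw [hwv, map_neg] at hy
    have h2 : nz • a + -m.f ⟨nz • b, h⟩ = 0 := hy.symm
    have h3 := neg_eq_of_add_eq_zero_right h2
    exact neg_injective h3.symm
  -- the new subgroup and function
  set G' : AddSubgroup B := m.G ⊔ AddSubgroup.zmultiples b with hG'
  have hdec : ∀ x : ↥G', ∃ p : ↥m.G × ℤ, ((p.1 : B)) + p.2 • b = (x : B) := by
    rintro ⟨x, hx⟩
    rw [hG', AddSubgroup.mem_sup] at hx
    obtain ⟨y, hy, z, hz, hyz⟩ := hx
    rw [AddSubgroup.mem_zmultiples_iff] at hz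
    obtain ⟨n, hn⟩ := hz
    exact ⟨(⟨y, hy⟩, n), by simp [hn, hyz]⟩
  -- well-definedness
  have hker : ∀ p q : ↥m.G × ℤ, ((p.1 : B)) + p.2 • b = ((q.1 : B)) + q.2 • b →
      m.f p.1 + p.2 • a = m.f q.1 + q.2 • a := by
    rintro ⟨g1, n1⟩ ⟨g2, n2⟩ hpq
    simp only at hpq ⊢
    have hmem : (n2 - n1) • b ∈ m.G := by
      have : ((g1 : B)) - g2 = (n2 - n1) • b := by
        rw [sub_smul]
        rw [← sub_eq_zero] at hpq ⊢
        rw [← hpq]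
        abel
      rw [← this]
      exact sub_mem g1.2 g2.2
    have hval := P1 (n2 - n1) hmem
    have hsub : g1 - g2 = (⟨(n2 - n1) • b, hmem⟩ : ↥m.G) := by
      apply Subtype.ext
      simp only [AddSubgroup.coe_sub]
      rw [sub_smul]
      rw [← sub_eq_zero] at hpq ⊢
      rw [← hpq]
      abel
    have : m.f g1 - m.f g2 = (n2 - n1) • a := by
      rw [← map_sub, hsub, hval]
    rw [← sub_eq_zero]
    rw [sub_smul] at this
    rw [← sub_eq_zero] at this
    rw [← this]
    abel
  let dec : ↥G' → ↥m.G × ℤ := fun x => (hdec x).choose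
  have hdec' : ∀ x : ↥G', (((dec x).1 : B)) + (dec x).2 • b = (x : B) := fun x => (hdec x).choose_spec
  let f'fun : ↥G' → A := fun x => m.f (dec x).1 + (dec x).2 • a
  have keyval : ∀ (g : B) (hg : g ∈ m.G) (n : ℤ) (h : g + n • b ∈ G'),
      f'fun ⟨g + n • b, h⟩ = m.f ⟨g, hg⟩ + n • a := by
    intro g hg n h
    exact hker (dec ⟨g + n • b, h⟩) (⟨g, hg⟩, n) (by rw [hdec' ⟨g + n • b, h⟩])
  have f'add : ∀ x y : ↥G', f'fun (x + y) = f'fun x + f'fun y := by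
    intro x y
    have h1 : f'fun (x + y) = m.f (dec (x+y)).1 + (dec (x+y)).2 • a := rfl
    have h2 : f'fun x + f'fun y = m.f ((dec x).1 + (dec y).1) + ((dec x).2 + (dec y).2) • a := by
      simp only [f'fun, map_add, add_smul]
      abel
    rw [h1, h2]
    apply hker (dec (x+y)) (⟨(dec x).1 + (dec y).1, (dec x).2 + (dec y).2⟩)
    simp only [AddSubgroup.coe_add, add_smul]
    rw [hdec' (x+y), AddSubgroup.coe_add, ← hdec' x, ← hdec' y]
    abel
  let f' : ↥G' →+ A := AddMonoidHom.mk' f'fun f'add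
  have hGle : m.G ≤ G' := le_sup_left
  have hbG' : b ∈ G' := by
    apply AddSubgroup.mem_sup_right
    exact AddSubgroup.mem_zmultiples b
  have hf'ext : ∀ (x : B) (hx : x ∈ m.G), f' ⟨x, hGle hx⟩ = m.f ⟨x, hx⟩ := by
    intro x hx
    have h0 : x + (0:ℤ) • b ∈ G' := by simpa using hGle hx
    have hk := keyval x hx 0 h0
    have heq : (⟨x, hGle hx⟩ : ↥G') = ⟨x + (0:ℤ) • b, h0⟩ := by
      apply Subtype.ext; simp
    calc f' ⟨x, hGle hx⟩ = f'fun ⟨x + (0:ℤ) • b, h0⟩ := by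
          rw [show f' ⟨x, hGle hx⟩ = f'fun ⟨x, hGle hx⟩ from rfl, heq]
      _ = m.f ⟨x, hx⟩ + (0:ℤ) • a := hk
      _ = m.f ⟨x, hx⟩ := by simp
  -- the invariant for the extension
  have hinv : ∀ (V R : Type) [Fintype V] [Fintype R], ∀ (k : R → ℤ) (v : R → V → ℤ)
      (c : R → ↥G'),
      (∃ x : V → B, ∀ r, ∃ y : B, k r • y = (∑ j, v r j • x j) + ((c r : B))) →
      ∃ x : V → A, ∀ r, ∃ y : A, k r • y = (∑ j, v r j • x j) + f' (c r) := by
    intro V R _ _ k v c hBs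
    choose pdec hpdec using fun r => hdec (c r)
    obtain ⟨x, hx⟩ := hBs
    set eV := Fintype.equivFin V with heV
    set eR := Fintype.equivFin R with heR
    have ht : (⟨Fintype.card V, Fintype.card R, fun r' =>
        (k (eR.symm r'), fun j' => v (eR.symm r') (eV.symm j'), (pdec (eR.symm r')).2)⟩ :
          SysIdx) ∈ D := by
      refine ⟨fun r' => (pdec (eR.symm r')).1, fun j' => x (eV.symm j'), fun r' => ?_⟩
      obtain ⟨y, hy⟩ := hx (eR.symm r')
      refine ⟨y, ?_⟩
      simp only
      rw [Equiv.sum_comp eV.symm (fun j => v (eR.symm r') j • x j)]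
      rw [hy, ← hpdec (eR.symm r')]
      abel
    set t : SysIdx := ⟨Fintype.card V, Fintype.card R, fun r' =>
        (k (eR.symm r'), fun j' => v (eR.symm r') (eV.symm j'), (pdec (eR.symm r')).2)⟩ with hT
    -- the chosen witness for t
    obtain ⟨xw, hxw⟩ := hwit' t ht
    -- difference system solvable over m
    have hdiffB : ∃ xd : V → B, ∀ r, ∃ y : B, k r • y = (∑ j, v r j • xd j) +
        (((pdec r).1 - wit t ht (eR r) : ↥m.G) : B) := by
      refine ⟨fun j => x j - xw (eV j), fun r => ?_⟩
      obtain ⟨y1, hy1⟩ := hx r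
      obtain ⟨y2, hy2⟩ := hxw (eR r)
      simp only [hT, t, Equiv.symm_apply_apply] at hy2
      rw [← Equiv.sum_comp eV (fun j' => v r (eV.symm j') • xw j')] at hy2
      simp only [Equiv.symm_apply_apply] at hy2
      refine ⟨y1 - y2, ?_⟩
      have hc : ((c r : B)) = ((pdec r).1 : B) + (pdec r).2 • b := (hpdec r).symm
      rw [hc] at hy1
      simp_rw [smul_sub]
      rw [Finset.sum_sub_distrib, AddSubgroup.coe_sub]
      rw [hy1, hy2]
      abel
    obtain ⟨zA, hzA⟩ := m.inv' V R k v (fun r => (pdec r).1 - wit t ht (eR r)) hdiffB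
    -- realized system at `a`
    obtain ⟨xA, hxA⟩ := hA t ht
    refine ⟨fun j => xA (eV j) + zA j, fun r => ?_⟩
    obtain ⟨y1, hy1⟩ := hxA (eR r)
    simp only [hT, t, Equiv.symm_apply_apply] at hy1
    rw [← Equiv.sum_comp eV (fun j' => v r (eV.symm j') • xA j')] at hy1
    simp only [Equiv.symm_apply_apply] at hy1
    obtain ⟨y2, hy2⟩ := hzA r
    rw [map_sub] at hy2
    refine ⟨y1 + y2, ?_⟩
    have hcf : f' (c r) = m.f (pdec r).1 + (pdec r).2 • a := by
      have hmem2 : (((pdec r).1 : B)) + (pdec r).2 • b ∈ G' := by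
        rw [hpdec r]; exact (c r).2
      have heq : c r = (⟨((pdec r).1 : B) + (pdec r).2 • b, hmem2⟩ : ↥G') := by
        apply Subtype.ext
        exact (hpdec r).symm
      rw [heq]
      have := keyval ((pdec r).1 : B) (pdec r).1.2 (pdec r).2 hmem2
      rw [show f' (⟨((pdec r).1 : B) + (pdec r).2 • b, hmem2⟩ : ↥G') =
          f'fun ⟨((pdec r).1 : B) + (pdec r).2 • b, hmem2⟩ from rfl, this]
    rw [hcf]
    simp_rw [smul_add]
    rw [Finset.sum_add_distrib]
    rw [hy1, hy2]
    abel
  refine ⟨⟨G', f', fun a' => hGle (m.mem' a'), ?_, hinv⟩, ⟨hGle, hf'ext⟩, hbG'⟩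
  intro a' h
  have h1 : f' ⟨i a', h⟩ = m.f ⟨i a', m.mem' a'⟩ := hf'ext (i a') (m.mem' a')
  rw [h1, m.comp' a' (m.mem' a')]

end Extend

/-- There is a retraction `B →+ A`. -/
theorem exists_retraction (hi : Function.Injective i)
    (hpure : ∀ (n : ℕ) (a : A), (∃ b : B, n • b = i a) → ∃ a' : A, n • a' = a)
    (hsat : AlephOneSaturated abLang A) :
    ∃ ρ : B →+ A, ∀ a : A, ρ (i a) = a := by
  obtain ⟨mx, hmx⟩ := exists_maximal_of_chains_bounded (r := le (i := i))
    (chain_bound hi hpure) (fun h1 h2 => le_trans h1 h2)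
  have htop : ∀ x : B, x ∈ mx.G := by
    intro x
    by_contra hx
    obtain ⟨p, hle, hxp⟩ := extend hi hsat mx x hx
    exact hx ((hmx p hle).1 hxp)
  refine ⟨AddMonoidHom.mk' (fun x => mx.f ⟨x, htop x⟩) ?_, ?_⟩
  · intro x y
    show mx.f ⟨x + y, htop _⟩ = mx.f ⟨x, htop x⟩ + mx.f ⟨y, htop y⟩
    have h : (⟨x + y, htop _⟩ : ↥mx.G) = ⟨x, htop x⟩ + ⟨y, htop y⟩ := rfl
    rw [h, map_add]
  · intro a
    exact mx.comp' a (htop _)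

end PartRetr

end Stmt7Aux

/-- An exact sequence `0 → A → B → C → 0` of abelian groups in which `A` is pure in `B` and
`A` is `ℵ₁`-saturated splits: `B ≅ A × C` compatibly with the maps. -/
theorem stmt7 (A B C : Type u) [AddCommGroup A] [AddCommGroup B] [AddCommGroup C]
    (i : A →+ B) (π : B →+ C) (hi : Function.Injective i) (hπ : Function.Surjective π)
    (hexact : ∀ b : B, π b = 0 ↔ ∃ a : A, i a = b)
    (hpure : ∀ (n : ℕ) (a : A), (∃ b : B, n • b = i a) → ∃ a' : A, n • a' = a)
    (hsat : AlephOneSaturated abLang A) :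
    ∃ e : B ≃+ A × C, (∀ a : A, e (i a) = (a, 0)) ∧ ∀ b : B, (e b).2 = π b := by
  obtain ⟨ρ, hρ⟩ := Stmt7Aux.PartRetr.exists_retraction (i := i) hi hpure hsat
  have hπi : ∀ a : A, π (i a) = 0 := fun a => (hexact (i a)).2 ⟨a, rfl⟩
  set g : B →+ A × C := ρ.prod π with hg
  have hbij : Function.Bijective g := by
    constructor
    · rw [injective_iff_map_eq_zero]
      intro x hx
      have h1 : ρ x = 0 := congrArg Prod.fst hx
      have h2 : π x = 0 := congrArg Prod.snd hx
      obtain ⟨a, ha⟩ := (hexact x).1 h2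
      have : a = 0 := by rw [← hρ a, ha, h1]
      rw [← ha, this, map_zero]
    · rintro ⟨p, q⟩
      obtain ⟨b0, hb0⟩ := hπ q
      refine ⟨b0 + i (p - ρ b0), ?_⟩
      have h1 : ρ (b0 + i (p - ρ b0)) = p := by
        rw [map_add, hρ (p - ρ b0)]
        abel
      have h2 : π (b0 + i (p - ρ b0)) = q := by
        rw [map_add, hπi, hb0, add_zero]
      show (ρ (b0 + i (p - ρ b0)), π (b0 + i (p - ρ b0))) = (p, q)
      rw [h1, h2]
  refine ⟨AddEquiv.ofBijective g hbij, ?_, ?_⟩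
  · intro a
    show g (i a) = (a, 0)
    simp [hg, AddMonoidHom.prod_apply, hρ a, hπi a]
  · intro b
    rfl
end
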